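/- Let (A,Π) be a Lie conformal algebra with a ℂ[∂]-module decomposition A = A₁ ⊕ A₂, and let H : A₂ → A₁ be a ℂ[∂]-module homomorphism with lift Ĥ. Define the twisting Π^H := e^{X_Ĥ}(Π), where X_Ĥ = [·,Ĥ]_NR. Then: (i) Π^H = Π + [Π,Ĥ]_NR + (1/2)[[Π,Ĥ]_NR,Ĥ]_NR + (1/6)[[[Π,Ĥ]_NR,Ĥ]_NR,Ĥ]_NR (the exponential series truncates); (ii) Π^H_λ = e^{-Ĥ} ∘ Π_λ ∘ (e^Ĥ ⊗ e^Ĥ); (iii) [Π^H,Π^H]_NR = 0, so Π^H is again a Lie conformal algebra structure on A, and e^Ĥ = Id + Ĥ is an isomorphism of Lie conformal algebras from (A,Π^H) to (A,Π). -/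

import Mathlib

/- ------------------------------------------------------------------
Common definitions: λ-polynomials with coefficients in a ℂ[∂]-module,
Lie conformal algebras, modules, cochain complexes, the
Nijenhuis–Richardson bracket, bidegrees, lifts and twistings.
------------------------------------------------------------------- -/

open scoped Classical

noncomputable section

namespace LCAF

/-- `MP k M` : `M`-valued polynomials in the `k` variables `λ₀, …, λ_{k-1}`,
encoded as finitely supported functions on multi-indices. -/
abbrev MP (k : ℕ) (M : Type*) [AddCommGroup M] : Type _ :=
  (Fin k →₀ ℕ) →₀ M

variable {A B M N A₁ A₂ : Type*}

section PolyOps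

variable [AddCommGroup M] [Module ℂ M] [AddCommGroup N] [Module ℂ N]

/-- Apply a linear map to all coefficients of a polynomial. -/
def mapCoeff {k : ℕ} (g : M →ₗ[ℂ] N) (p : MP k M) : MP k N :=
  p.mapRange g (map_zero g)

/-- Multiplication by the monomial `λ^α`. -/
def monMul {k : ℕ} (α : Fin k →₀ ℕ) (p : MP k M) : MP k M :=
  Finsupp.mapDomain (fun β => α + β) p

/-- The variable `λᵢ` as a scalar polynomial. -/
def Xv {k : ℕ} (i : Fin k) : MP k ℂ :=
  Finsupp.single (Finsupp.single i 1) (1 : ℂ)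

/-- Multiplication of an `M`-valued polynomial by a scalar polynomial. -/
def scaleP {k : ℕ} (q : MP k ℂ) (p : MP k M) : MP k M :=
  q.sum fun α r => r • monMul α p

/-- The operator `q + c∂` acting on `M`-valued polynomials. -/
def opnd {k : ℕ} (D : M →ₗ[ℂ] M) (q : MP k ℂ) (c : ℂ) : MP k M → MP k M :=
  fun p => scaleP q p + c • mapCoeff D p

/-- Substitution: in an `M`-valued polynomial in `k` variables, substitute the
`i`-th variable by the affine expression `q i + (c i)·∂` (with `∂ = D` acting on
coefficients), landing in polynomials in `k'` new variables. -/
def substFun {k k' : ℕ} (D : M →ₗ[ℂ] M) (q : Fin k → MP k' ℂ) (c : Fin k → ℂ)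
    (p : MP k M) : MP k' M :=
  p.sum fun α m =>
    ((List.ofFn fun i : Fin k => (opnd D (q i) (c i))^[α i]).foldr (· ∘ ·) id)
      (Finsupp.single 0 m)

/-- Renaming of variables. -/
def renameV {k k' : ℕ} (h : Fin k → Fin k') (p : MP k M) : MP k' M :=
  Finsupp.mapDomain (fun α => Finsupp.mapDomain h α) p

/-- The substitution `λ ↦ -λ-∂` in one variable. -/
def sub1 (D : M →ₗ[ℂ] M) (p : MP 1 M) : MP 1 M :=
  substFun D (fun _ => -(Xv 0)) (fun _ => -1) p

/-- The multi-index of the single variable `λ` in one variable. -/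
def lam1 : Fin 1 →₀ ℕ := Finsupp.single 0 1

end PolyOps

section Binary

variable [AddCommGroup M] [Module ℂ M]

/-- `F` with its variable substituted by the expression `q + c ∂`, in two
variables `λ = λ₀`, `μ = λ₁`. -/
def opE (D : M →ₗ[ℂ] M) (F : A → B → MP 1 M) (q : MP 2 ℂ) (c : ℂ) (a : A) (b : B) :
    MP 2 M :=
  substFun D (fun _ => q) (fun _ => c) (F a b)

/-- `F` applied with polynomial second argument (extended coefficientwise). -/
def opR [AddCommGroup B] [Module ℂ B] (D : M →ₗ[ℂ] M) (F : A → B → MP 1 M)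
    (q : MP 2 ℂ) (c : ℂ) (a : A) (p : MP 2 B) : MP 2 M :=
  p.sum fun β x => monMul β (opE D F q c a x)

/-- `F` applied with polynomial first argument (extended coefficientwise). -/
def opL [AddCommGroup A] [Module ℂ A] (D : M →ₗ[ℂ] M) (F : A → B → MP 1 M)
    (q : MP 2 ℂ) (c : ℂ) (p : MP 2 A) (b : B) : MP 2 M :=
  p.sum fun β x => monMul β (opE D F q c x b)

end Binary

section LCA

variable [AddCommGroup A] [Module ℂ A] [AddCommGroup M] [Module ℂ M]

/-- `(A, D, br)` is a Lie conformal algebra: `br a b` is `[a_λ b]`, an `A`-valued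
polynomial in one variable `λ`. -/
structure IsLCA (D : A →ₗ[ℂ] A) (br : A → A → MP 1 A) : Prop where
  add_left : ∀ a b c : A, br (a + b) c = br a c + br b c
  smul_left : ∀ (r : ℂ) (a b : A), br (r • a) b = r • br a b
  add_right : ∀ a b c : A, br a (b + c) = br a b + br a c
  smul_right : ∀ (r : ℂ) (a b : A), br a (r • b) = r • br a b
  sesq_left : ∀ a b : A, br (D a) b = -(monMul lam1 (br a b))
  sesq_right : ∀ a b : A, br a (D b) = monMul lam1 (br a b) + mapCoeff D (br a b)
  skew : ∀ a b : A, br a b = -(sub1 D (br b a))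
  jacobi : ∀ a b c : A,
    opR D br (Xv 0) 0 a (renameV (fun _ => (1 : Fin 2)) (br b c)) =
      opL D br (Xv 0 + Xv 1) 0 (renameV (fun _ => (0 : Fin 2)) (br a b)) c +
        opR D br (Xv 1) 0 b (renameV (fun _ => (0 : Fin 2)) (br a c))

/-- `(M, DM, rho)` is a module over the Lie conformal algebra `(A, D, br)`. -/
structure IsLCAMod (D : A →ₗ[ℂ] A) (br : A → A → MP 1 A)
    (DM : M →ₗ[ℂ] M) (rho : A → M → MP 1 M) : Prop where
  add_left : ∀ (a b : A) (m : M), rho (a + b) m = rho a m + rho b m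
  smul_left : ∀ (r : ℂ) (a : A) (m : M), rho (r • a) m = r • rho a m
  add_right : ∀ (a : A) (m n : M), rho a (m + n) = rho a m + rho a n
  smul_right : ∀ (r : ℂ) (a : A) (m : M), rho a (r • m) = r • rho a m
  d_left : ∀ (a : A) (m : M), rho (D a) m = -(monMul lam1 (rho a m))
  d_right : ∀ (a : A) (m : M),
    rho a (DM m) = monMul lam1 (rho a m) + mapCoeff DM (rho a m)
  comm : ∀ (a b : A) (m : M),
    opR DM rho (Xv 0) 0 a (renameV (fun _ => (1 : Fin 2)) (rho b m)) -
      opR DM rho (Xv 1) 0 b (renameV (fun _ => (0 : Fin 2)) (rho a m)) =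
    opL DM rho (Xv 0 + Xv 1) 0 (renameV (fun _ => (0 : Fin 2)) (br a b)) m

/-- `phi` is a 2-cocycle of `(A, D, br)` with coefficients in the module
`(M, DM, rho)`. -/
structure IsTwoCocycle (D : A →ₗ[ℂ] A) (br : A → A → MP 1 A)
    (DM : M →ₗ[ℂ] M) (rho : A → M → MP 1 M) (phi : A → A → MP 1 M) : Prop where
  add_left : ∀ (a b c : A), phi (a + b) c = phi a c + phi b c
  smul_left : ∀ (r : ℂ) (a b : A), phi (r • a) b = r • phi a b
  add_right : ∀ (a b c : A), phi a (b + c) = phi a b + phi a c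
  smul_right : ∀ (r : ℂ) (a b : A), phi a (r • b) = r • phi a b
  sesq_left : ∀ a b : A, phi (D a) b = -(monMul lam1 (phi a b))
  sesq_right : ∀ a b : A, phi a (D b) = monMul lam1 (phi a b) + mapCoeff DM (phi a b)
  skew : ∀ a b : A, phi a b = -(sub1 DM (phi b a))
  cocycle : ∀ a b c : A,
    opR DM rho (Xv 0) 0 a (renameV (fun _ => (1 : Fin 2)) (phi b c))
      - opR DM rho (Xv 1) 0 b (renameV (fun _ => (0 : Fin 2)) (phi a c))
      + opR DM rho (-(Xv 0) - Xv 1) (-1) c (renameV (fun _ => (0 : Fin 2)) (phi a b))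
      + opR DM phi (Xv 0) 0 a (renameV (fun _ => (1 : Fin 2)) (br b c))
      - opR DM phi (Xv 1) 0 b (renameV (fun _ => (0 : Fin 2)) (br a c))
      - opL DM phi (Xv 0 + Xv 1) 0 (renameV (fun _ => (0 : Fin 2)) (br a b)) c = 0

/-- `T : M → A` is a relative Rota–Baxter operator. -/
def IsRB (br : A → A → MP 1 A) (DM : M →ₗ[ℂ] M) (rho : A → M → MP 1 M)
    (T : M →ₗ[ℂ] A) : Prop :=
  ∀ m n : M, br (T m) (T n) = mapCoeff T (rho (T m) n - sub1 DM (rho (T n) m))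

/-- `T : M → A` is a `φ`-twisted relative Rota–Baxter operator. -/
def IsTwistedRB (br : A → A → MP 1 A) (DM : M →ₗ[ℂ] M) (rho : A → M → MP 1 M)
    (phi : A → A → MP 1 M) (T : M →ₗ[ℂ] A) : Prop :=
  ∀ m n : M, br (T m) (T n) =
    mapCoeff T (rho (T m) n - sub1 DM (rho (T n) m) + phi (T m) (T n))

/-- Combine an `A`-valued and an `M`-valued polynomial into an `A × M`-valued one. -/
def pairP {k : ℕ} (p : MP k A) (q : MP k M) : MP k (A × M) :=
  Finsupp.mapRange (fun a => (a, (0 : M))) rfl p +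
    Finsupp.mapRange (fun m => ((0 : A), m)) rfl q

/-- The (φ-twisted) semidirect product λ-bracket on `A × M`. -/
def sdBr (br : A → A → MP 1 A) (DM : M →ₗ[ℂ] M) (rho : A → M → MP 1 M)
    (phi : A → A → MP 1 M) : A × M → A × M → MP 1 (A × M) :=
  fun x y => pairP (br x.1 y.1) (rho x.1 y.2 - sub1 DM (rho y.1 x.2) + phi x.1 y.1)

end LCA

section NS

variable [AddCommGroup A] [Module ℂ A]

/-- The λ-bracket `[a_λ b] = a∘_λ b - b∘_{-λ-∂} a + a∨_λ b` attached to a pair of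
λ-multiplications. -/
def lieNS (D : A →ₗ[ℂ] A) (o v : A → A → MP 1 A) : A → A → MP 1 A :=
  fun a b => o a b - sub1 D (o b a) + v a b

/-- `(A, ∘_λ, ∨_λ)` is an NS-Lie conformal algebra. -/
structure IsNSLie (D : A →ₗ[ℂ] A) (o v : A → A → MP 1 A) : Prop where
  o_add_left : ∀ a b c : A, o (a + b) c = o a c + o b c
  o_smul_left : ∀ (r : ℂ) (a b : A), o (r • a) b = r • o a b
  o_add_right : ∀ a b c : A, o a (b + c) = o a b + o a c
  o_smul_right : ∀ (r : ℂ) (a b : A), o a (r • b) = r • o a b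
  o_sesq_left : ∀ a b : A, o (D a) b = -(monMul lam1 (o a b))
  o_sesq_right : ∀ a b : A, o a (D b) = monMul lam1 (o a b) + mapCoeff D (o a b)
  v_add_left : ∀ a b c : A, v (a + b) c = v a c + v b c
  v_smul_left : ∀ (r : ℂ) (a b : A), v (r • a) b = r • v a b
  v_add_right : ∀ a b c : A, v a (b + c) = v a b + v a c
  v_smul_right : ∀ (r : ℂ) (a b : A), v a (r • b) = r • v a b
  v_sesq_left : ∀ a b : A, v (D a) b = -(monMul lam1 (v a b))
  v_sesq_right : ∀ a b : A, v a (D b) = monMul lam1 (v a b) + mapCoeff D (v a b)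
  v_skew : ∀ a b : A, v a b = -(sub1 D (v b a))
  ns1 : ∀ a b c : A,
    opL D o (Xv 0 + Xv 1) 0 (renameV (fun _ => (0 : Fin 2)) (o a b)) c
      - opR D o (Xv 0) 0 a (renameV (fun _ => (1 : Fin 2)) (o b c))
      - opL D o (Xv 0 + Xv 1) 0 (renameV (fun _ => (1 : Fin 2)) (o b a)) c
      + opR D o (Xv 1) 0 b (renameV (fun _ => (0 : Fin 2)) (o a c))
      + opL D o (Xv 0 + Xv 1) 0 (renameV (fun _ => (0 : Fin 2)) (v a b)) c = 0
  ns2 : ∀ a b c : A,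
    opR D v (Xv 0) 0 a (renameV (fun _ => (1 : Fin 2)) (lieNS D o v b c))
      - opL D v (Xv 0 + Xv 1) 0 (renameV (fun _ => (0 : Fin 2)) (lieNS D o v a b)) c
      - opR D v (Xv 1) 0 b (renameV (fun _ => (0 : Fin 2)) (lieNS D o v a c))
      + opR D o (Xv 0) 0 a (renameV (fun _ => (1 : Fin 2)) (v b c))
      - opR D o (Xv 1) 0 b (renameV (fun _ => (0 : Fin 2)) (v a c))
      + opR D o (-(Xv 0) - Xv 1) (-1) c (renameV (fun _ => (0 : Fin 2)) (v a b)) = 0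

/-- `(A, ≻_λ, ≺_λ, ⋎_λ)` is a conformal NS-algebra. -/
structure IsConfNS (D : A →ₗ[ℂ] A) (su pr cu : A → A → MP 1 A) : Prop where
  su_add_left : ∀ a b c : A, su (a + b) c = su a c + su b c
  su_smul_left : ∀ (r : ℂ) (a b : A), su (r • a) b = r • su a b
  su_add_right : ∀ a b c : A, su a (b + c) = su a b + su a c
  su_smul_right : ∀ (r : ℂ) (a b : A), su a (r • b) = r • su a b
  su_sesq_left : ∀ a b : A, su (D a) b = -(monMul lam1 (su a b))
  su_sesq_right : ∀ a b : A, su a (D b) = monMul lam1 (su a b) + mapCoeff D (su a b)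
  pr_add_left : ∀ a b c : A, pr (a + b) c = pr a c + pr b c
  pr_smul_left : ∀ (r : ℂ) (a b : A), pr (r • a) b = r • pr a b
  pr_add_right : ∀ a b c : A, pr a (b + c) = pr a b + pr a c
  pr_smul_right : ∀ (r : ℂ) (a b : A), pr a (r • b) = r • pr a b
  pr_sesq_left : ∀ a b : A, pr (D a) b = -(monMul lam1 (pr a b))
  pr_sesq_right : ∀ a b : A, pr a (D b) = monMul lam1 (pr a b) + mapCoeff D (pr a b)
  cu_add_left : ∀ a b c : A, cu (a + b) c = cu a c + cu b c
  cu_smul_left : ∀ (r : ℂ) (a b : A), cu (r • a) b = r • cu a b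
  cu_add_right : ∀ a b c : A, cu a (b + c) = cu a b + cu a c
  cu_smul_right : ∀ (r : ℂ) (a b : A), cu a (r • b) = r • cu a b
  cu_sesq_left : ∀ a b : A, cu (D a) b = -(monMul lam1 (cu a b))
  cu_sesq_right : ∀ a b : A, cu a (D b) = monMul lam1 (cu a b) + mapCoeff D (cu a b)
  ax1 : ∀ x y z : A,
    opR D su (Xv 0) 0 x (renameV (fun _ => (1 : Fin 2)) (su y z)) =
      opL D su (Xv 0 + Xv 1) 0
        (renameV (fun _ => (0 : Fin 2)) (su x y + pr x y + cu x y)) z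
  ax2 : ∀ x y z : A,
    opR D pr (Xv 0) 0 x (renameV (fun _ => (1 : Fin 2)) (su y z + pr y z + cu y z)) =
      opL D pr (Xv 0 + Xv 1) 0 (renameV (fun _ => (0 : Fin 2)) (pr x y)) z
  ax3 : ∀ x y z : A,
    opR D su (Xv 0) 0 x (renameV (fun _ => (1 : Fin 2)) (pr y z)) =
      opL D pr (Xv 0 + Xv 1) 0 (renameV (fun _ => (0 : Fin 2)) (su x y)) z
  ax4 : ∀ x y z : A,
    opR D su (Xv 0) 0 x (renameV (fun _ => (1 : Fin 2)) (cu y z)) -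
        opL D cu (Xv 0 + Xv 1) 0
          (renameV (fun _ => (0 : Fin 2)) (su x y + pr x y + cu x y)) z =
      opL D pr (Xv 0 + Xv 1) 0 (renameV (fun _ => (0 : Fin 2)) (cu x y)) z -
        opR D cu (Xv 0) 0 x (renameV (fun _ => (1 : Fin 2)) (su y z + pr y z + cu y z))

/-- `N` is a Nijenhuis operator on the Lie conformal algebra `(A, D, br)`. -/
def IsNijenhuis (D : A →ₗ[ℂ] A) (br : A → A → MP 1 A) (N : A →ₗ[ℂ] A) : Prop :=
  (∀ a : A, N (D a) = D (N a)) ∧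
  ∀ a b : A, br (N a) (N b) =
    mapCoeff N (br (N a) b + br a (N b) - mapCoeff N (br a b))

/-- The deformed bracket `[a_λ b]_N`. -/
def deformBr (br : A → A → MP 1 A) (N : A →ₗ[ℂ] A) : A → A → MP 1 A :=
  fun a b => br (N a) b + br a (N b) - mapCoeff N (br a b)

end NS

/- ------------------------  cochains  ------------------------ -/

/-- `RawC n A M` : the underlying maps of cochains in `C^{n+1}(A, M)`:
`n+1` arguments from `A`, values in `M`-valued polynomials in `n` variables. -/
abbrev RawC (n : ℕ) (A : Type*) (M : Type*) [AddCommGroup M] : Type _ :=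
  (Fin (n + 1) → A) → MP n M

section CochainDefs

variable [AddCommGroup A] [Module ℂ A] [AddCommGroup M] [Module ℂ M]

/-- The scalar-polynomial part of the expression for `λ_t`, where the last
variable is replaced by `λ† = -λ₀ - ⋯ - λ_{N-1} - ∂`. -/
def exprQ {N : ℕ} (t : Fin (N + 1)) : MP N ℂ :=
  if h : t = Fin.last N then -(∑ i : Fin N, Xv i) else Xv (t.castPred h)

/-- The `∂`-coefficient of the expression for `λ_t`. -/
def exprC {N : ℕ} (t : Fin (N + 1)) : ℂ :=
  if t = Fin.last N then -1 else 0

/-- `f` is a cochain in `C^{n+1}(A, M)` (conformal sesquilinearity, multilinearity,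
and skew-symmetry with the substitution `λ_{last} ↦ λ†`). -/
structure IsCochain {n : ℕ} (DA : A →ₗ[ℂ] A) (DM : M →ₗ[ℂ] M) (f : RawC n A M) :
    Prop where
  map_add : ∀ (a : Fin (n + 1) → A) (i : Fin (n + 1)) (x y : A),
    f (Function.update a i (x + y)) =
      f (Function.update a i x) + f (Function.update a i y)
  map_smul : ∀ (a : Fin (n + 1) → A) (i : Fin (n + 1)) (r : ℂ) (x : A),
    f (Function.update a i (r • x)) = r • f (Function.update a i x)
  sesq : ∀ (a : Fin (n + 1) → A) (i : Fin n),
    f (Function.update a i.castSucc (DA (a i.castSucc))) =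
      -(monMul (Finsupp.single i 1) (f a))
  sesq_last : ∀ a : Fin (n + 1) → A,
    f (Function.update a (Fin.last n) (DA (a (Fin.last n)))) =
      (∑ i : Fin n, monMul (Finsupp.single i 1) (f a)) + mapCoeff DM (f a)
  skew : ∀ (σ : Equiv.Perm (Fin (n + 1))) (a : Fin (n + 1) → A),
    f a = ((Equiv.Perm.sign σ : ℤˣ) : ℤ) •
      substFun DM (fun j : Fin n => exprQ (σ j.castSucc))
        (fun j : Fin n => exprC (σ j.castSucc)) (f (a ∘ σ))

/-- `(t, N-t)`-unshuffles : permutations strictly increasing on the first `t`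
positions and on the remaining positions. -/
def IsUnsh {N : ℕ} (t : ℕ) (σ : Equiv.Perm (Fin N)) : Prop :=
  ∀ i j : Fin N, i < j → (j.val < t ∨ t ≤ i.val) → σ i < σ j

/-- The `⋄`-product (unshuffle-sum insertion) of cochains:
`f ∈ C^{p+1}(A,A)`, `g ∈ C^{q+1}(A,A)`, `f⋄g ∈ C^{p+q+1}(A,A)`. -/
def diamond {p q : ℕ} (DA : A →ₗ[ℂ] A) (f : RawC p A A) (g : RawC q A A) :
    RawC (p + q) A A := fun a =>
  ∑ σ ∈ Finset.univ.filter (fun σ : Equiv.Perm (Fin (p + q + 1)) => IsUnsh (q + 1) σ),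
    ((Equiv.Perm.sign σ : ℤˣ) : ℤ) •
      substFun DA
        (fun v : Fin (p + q) =>
          if v.val = q then
            ∑ i : Fin (q + 1), exprQ (σ (Fin.castLE (by omega) i))
          else exprQ (σ v.castSucc))
        (fun v : Fin (p + q) =>
          if v.val = q then
            ∑ i : Fin (q + 1), exprC (σ (Fin.castLE (by omega) i))
          else exprC (σ v.castSucc))
        ((g fun i : Fin (q + 1) => a (σ (Fin.castLE (by omega) i))).sum fun β x =>
          monMul
            (Finsupp.mapDomain
              (fun i : Fin q => (Fin.cast (by omega) (Fin.castAdd p i) : Fin (p + q))) β)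
            (renameV (fun j : Fin p => (Fin.cast (by omega) (Fin.natAdd q j) : Fin (p + q)))
              (f (Fin.cons x fun j : Fin p =>
                a (σ (Fin.cast (by omega) (Fin.natAdd (q + 1) j)))))))

/-- Transport a raw cochain along an equality of degrees. -/
def castRaw {m n : ℕ} (h : m = n) (f : RawC m A M) : RawC n A M := h ▸ f

/-- The Nijenhuis–Richardson bracket `[f,g] = f⋄g - (-1)^{pq} g⋄f`. -/
def nr {p q : ℕ} (DA : A →ₗ[ℂ] A) (f : RawC p A A) (g : RawC q A A) :
    RawC (p + q) A A :=
  diamond DA f g - ((-1 : ℤ)) ^ (p * q) • castRaw (Nat.add_comm q p) (diamond DA g f)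

end CochainDefs

section Bidegree

variable [AddCommGroup A₁] [Module ℂ A₁] [AddCommGroup A₂] [Module ℂ A₂]

/-- `x` is a pure element: in `A₁` (if `b`) or in `A₂` (if `¬b`). -/
def IsPure (x : A₁ × A₂) (b : Bool) : Prop :=
  if b then x.2 = 0 else x.1 = 0

/-- `f ∈ C^{n+1}(A₁⊕A₂, A₁⊕A₂)` has bidegree `k|l`. -/
def HasBidegree {n : ℕ} (f : RawC n (A₁ × A₂) (A₁ × A₂)) (k l : ℤ) : Prop :=
  k + l = (n : ℤ) ∧
  ∀ (P : Fin (n + 1) → Bool) (a : Fin (n + 1) → A₁ × A₂),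
    (∀ i, IsPure (a i) (P i)) →
    ((((Finset.univ.filter fun i => P i = true).card : ℤ) = k + 1 →
        ∀ β, ((f a) β).2 = 0) ∧
      ((((Finset.univ.filter fun i => P i = true).card : ℤ) = k) →
        ∀ β, ((f a) β).1 = 0) ∧
      (((((Finset.univ.filter fun i => P i = true).card : ℤ) ≠ k + 1) ∧
        (((Finset.univ.filter fun i => P i = true).card : ℤ) ≠ k)) → f a = 0))

/-- The lift of `f ∈ C^{n+1}(A₂, A₁)` to a cochain on `A₁ ⊕ A₂`. -/
def liftC {n : ℕ} (f : RawC n A₂ A₁) : RawC n (A₁ × A₂) (A₁ × A₂) :=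
  fun x => Finsupp.mapRange (fun a => (a, (0 : A₂))) rfl (f fun i => (x i).2)

/-- Recover `f ∈ C^{n+1}(A₂, A₁)` from (a lift of) a cochain on `A₁ ⊕ A₂`. -/
def downC {n : ℕ} (g : RawC n (A₁ × A₂) (A₁ × A₂)) : RawC n A₂ A₁ :=
  fun v => Finsupp.mapRange Prod.fst rfl (g fun i => ((0 : A₁), v i))

/-- The lift of a `ℂ[∂]`-module homomorphism `H : A₂ → A₁` as a `1`-cochain on
`A₁ ⊕ A₂`. -/
def hatHom (H : A₂ →ₗ[ℂ] A₁) : RawC 0 (A₁ × A₂) (A₁ × A₂) :=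
  fun x => Finsupp.single 0 (H ((x 0).2), (0 : A₂))

/-- `H : A₂ → A₁` viewed as an element of `C^1(A₂, A₁)`. -/
def hatC1 (H : A₂ →ₗ[ℂ] A₁) : RawC 0 A₂ A₁ :=
  fun v => Finsupp.single 0 (H (v 0))

/-- The structure map of a λ-bracket as a 2-cochain. -/
def toC2 {A : Type*} [AddCommGroup A] (br : A → A → MP 1 A) : RawC 1 A A :=
  fun a => br (a 0) (a 1)

/-- `l₁ = d_{μ̂₂}` on `C^*(A₂, A₁)`. -/
def ell1 (DA : (A₁ × A₂) →ₗ[ℂ] (A₁ × A₂)) (mu2 : RawC 1 (A₁ × A₂) (A₁ × A₂))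
    {n : ℕ} (f : RawC n A₂ A₁) : RawC (n + 1) A₂ A₁ :=
  downC (castRaw (show 1 + n = n + 1 by omega) (nr DA mu2 (liftC f)))

/-- `l₂ = [·,·]_{μ̂₁}` on `C^*(A₂, A₁)`. -/
def ell2 (DA : (A₁ × A₂) →ₗ[ℂ] (A₁ × A₂)) (mu1 : RawC 1 (A₁ × A₂) (A₁ × A₂))
    {m n : ℕ} (f : RawC m A₂ A₁) (g : RawC n A₂ A₁) : RawC (m + n + 1) A₂ A₁ :=
  ((-1 : ℤ)) ^ m •
    downC (castRaw (show 1 + m + n = m + n + 1 by omega)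
      (nr DA (nr DA mu1 (liftC f)) (liftC g)))

/-- `l₃ = [·,·,·]_{φ̂₁}` on `C^*(A₂, A₁)`. -/
def ell3 (DA : (A₁ × A₂) →ₗ[ℂ] (A₁ × A₂)) (phi1 : RawC 1 (A₁ × A₂) (A₁ × A₂))
    {m n k : ℕ} (f : RawC m A₂ A₁) (g : RawC n A₂ A₁) (h : RawC k A₂ A₁) :
    RawC (m + n + k + 1) A₂ A₁ :=
  ((-1 : ℤ)) ^ n •
    downC (castRaw (show 1 + m + n + k = m + n + k + 1 by omega)
      (nr DA (nr DA (nr DA phi1 (liftC f)) (liftC g)) (liftC h)))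

/-- `Π` is a twilled Lie conformal algebra structure on `A₁ ⊕ A₂`. -/
def IsTwilledStr (DA : (A₁ × A₂) →ₗ[ℂ] (A₁ × A₂))
    (Pi : RawC 1 (A₁ × A₂) (A₁ × A₂)) : Prop :=
  IsCochain DA DA Pi ∧ nr DA Pi Pi = 0 ∧
    ∃ m1 m2 : RawC 1 (A₁ × A₂) (A₁ × A₂),
      HasBidegree m1 1 0 ∧ HasBidegree m2 0 1 ∧ Pi = m1 + m2

/-- `Π` is a quasi-twilled Lie conformal algebra structure on `A₁ ⊕ A₂`. -/
def IsQuasiTwilledStr (DA : (A₁ × A₂) →ₗ[ℂ] (A₁ × A₂))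
    (Pi : RawC 1 (A₁ × A₂) (A₁ × A₂)) : Prop :=
  IsCochain DA DA Pi ∧ nr DA Pi Pi = 0 ∧
    ∃ p1 m1 m2 : RawC 1 (A₁ × A₂) (A₁ × A₂),
      HasBidegree p1 2 (-1) ∧ HasBidegree m1 1 0 ∧ HasBidegree m2 0 1 ∧
        Pi = p1 + m1 + m2

end Bidegree

section Twist

variable [AddCommGroup A] [Module ℂ A]

/-- The twisting `Π^H = e^{X_Ĥ}(Π)` of a `2`-cochain by (the lift of) a
`ℂ[∂]`-module homomorphism. -/
def twist (DA : A →ₗ[ℂ] A) (Pi : RawC 1 A A) (hH : RawC 0 A A) : RawC 1 A A :=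
  Pi + nr DA Pi hH + (2 : ℂ)⁻¹ • nr DA (nr DA Pi hH) hH
    + (6 : ℂ)⁻¹ • nr DA (nr DA (nr DA Pi hH) hH) hH

end Twist

end LCAF

namespace LCAF

section GradedStructures

variable {A₁ A₂ : Type*} [AddCommGroup A₁] [Module ℂ A₁] [AddCommGroup A₂] [Module ℂ A₂]

/-- The subspace of `⊕ₙ RawC n A₂ A₁` cut out by `P` (placing `RawC n` in degree
`n+1`), equipped with `d` and `br`, is a differential graded Lie algebra. -/
structure IsDGLAOn
    (P : ∀ {n : ℕ}, RawC n A₂ A₁ → Prop)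
    (d : ∀ {n : ℕ}, RawC n A₂ A₁ → RawC (n + 1) A₂ A₁)
    (br : ∀ {m n : ℕ}, RawC m A₂ A₁ → RawC n A₂ A₁ → RawC (m + n + 1) A₂ A₁) :
    Prop where
  mem_zero : ∀ {n : ℕ}, P (0 : RawC n A₂ A₁)
  mem_add : ∀ {n : ℕ} (f g : RawC n A₂ A₁), P f → P g → P (f + g)
  mem_smul : ∀ {n : ℕ} (r : ℂ) (f : RawC n A₂ A₁), P f → P (r • f)
  mem_d : ∀ {n : ℕ} (f : RawC n A₂ A₁), P f → P (d f)
  mem_br : ∀ {m n : ℕ} (f : RawC m A₂ A₁) (g : RawC n A₂ A₁), P f → P g → P (br f g)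
  d_add : ∀ {n : ℕ} (f g : RawC n A₂ A₁), P f → P g → d (f + g) = d f + d g
  d_smul : ∀ {n : ℕ} (r : ℂ) (f : RawC n A₂ A₁), P f → d (r • f) = r • d f
  br_add_left : ∀ {m n : ℕ} (f f' : RawC m A₂ A₁) (g : RawC n A₂ A₁),
    P f → P f' → P g → br (f + f') g = br f g + br f' g
  br_smul_left : ∀ {m n : ℕ} (r : ℂ) (f : RawC m A₂ A₁) (g : RawC n A₂ A₁),
    P f → P g → br (r • f) g = r • br f g
  br_add_right : ∀ {m n : ℕ} (f : RawC m A₂ A₁) (g g' : RawC n A₂ A₁),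
    P f → P g → P g' → br f (g + g') = br f g + br f g'
  br_smul_right : ∀ {m n : ℕ} (r : ℂ) (f : RawC m A₂ A₁) (g : RawC n A₂ A₁),
    P f → P g → br f (r • g) = r • br f g
  d_squared : ∀ {n : ℕ} (f : RawC n A₂ A₁), P f → d (d f) = 0
  skew : ∀ {m n : ℕ} (f : RawC m A₂ A₁) (g : RawC n A₂ A₁), P f → P g →
    br f g = ((-1 : ℤ)) ^ ((m + 1) * (n + 1) + 1) •
      castRaw (show n + m + 1 = m + n + 1 by omega) (br g f)
  leibniz : ∀ {m n : ℕ} (f : RawC m A₂ A₁) (g : RawC n A₂ A₁), P f → P g →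
    castRaw (show m + n + 1 + 1 = m + n + 2 by omega) (d (br f g)) =
      castRaw (show m + 1 + n + 1 = m + n + 2 by omega) (br (d f) g) +
      ((-1 : ℤ)) ^ (m + 1) •
        castRaw (show m + (n + 1) + 1 = m + n + 2 by omega) (br f (d g))
  jacobi : ∀ {m n k : ℕ} (f : RawC m A₂ A₁) (g : RawC n A₂ A₁) (h : RawC k A₂ A₁),
    P f → P g → P h →
    castRaw (show m + (n + k + 1) + 1 = m + n + k + 2 by omega) (br f (br g h)) =
      castRaw (show m + n + 1 + k + 1 = m + n + k + 2 by omega) (br (br f g) h) +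
      ((-1 : ℤ)) ^ ((m + 1) * (n + 1)) •
        castRaw (show n + (m + k + 1) + 1 = m + n + k + 2 by omega) (br g (br f h))

/-- The subspace of `⊕ₙ RawC n A₂ A₁` cut out by `P` (placing `RawC n` in degree
`n+1`), with operations `l₁, l₂, l₃` (and `lᵢ = 0` for `i ≥ 4`), is an
`L∞`-algebra: graded skew-symmetry and the higher Jacobi identities
`∑_{i+j=n+1} (-1)^i ∑_{σ ∈ Sh(i,n-i)} χ(σ) l_j(l_i(x_{σ(1)},…),…) = 0`
(only `n = 1, …, 5` are nontrivial since `lᵢ = 0` for `i ≥ 4`). -/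
structure IsLInftyOn
    (P : ∀ {n : ℕ}, RawC n A₂ A₁ → Prop)
    (l1 : ∀ {n : ℕ}, RawC n A₂ A₁ → RawC (n + 1) A₂ A₁)
    (l2 : ∀ {m n : ℕ}, RawC m A₂ A₁ → RawC n A₂ A₁ → RawC (m + n + 1) A₂ A₁)
    (l3 : ∀ {m n k : ℕ}, RawC m A₂ A₁ → RawC n A₂ A₁ → RawC k A₂ A₁ →
      RawC (m + n + k + 1) A₂ A₁) : Prop where
  mem_zero : ∀ {n : ℕ}, P (0 : RawC n A₂ A₁)
  mem_add : ∀ {n : ℕ} (f g : RawC n A₂ A₁), P f → P g → P (f + g)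
  mem_smul : ∀ {n : ℕ} (r : ℂ) (f : RawC n A₂ A₁), P f → P (r • f)
  mem_l1 : ∀ {n : ℕ} (f : RawC n A₂ A₁), P f → P (l1 f)
  mem_l2 : ∀ {m n : ℕ} (f : RawC m A₂ A₁) (g : RawC n A₂ A₁), P f → P g → P (l2 f g)
  mem_l3 : ∀ {m n k : ℕ} (f : RawC m A₂ A₁) (g : RawC n A₂ A₁) (h : RawC k A₂ A₁),
    P f → P g → P h → P (l3 f g h)
  l1_add : ∀ {n : ℕ} (f g : RawC n A₂ A₁), P f → P g → l1 (f + g) = l1 f + l1 g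
  l1_smul : ∀ {n : ℕ} (r : ℂ) (f : RawC n A₂ A₁), P f → l1 (r • f) = r • l1 f
  l2_add_left : ∀ {m n : ℕ} (f f' : RawC m A₂ A₁) (g : RawC n A₂ A₁),
    P f → P f' → P g → l2 (f + f') g = l2 f g + l2 f' g
  l2_smul_left : ∀ {m n : ℕ} (r : ℂ) (f : RawC m A₂ A₁) (g : RawC n A₂ A₁),
    P f → P g → l2 (r • f) g = r • l2 f g
  l2_add_right : ∀ {m n : ℕ} (f : RawC m A₂ A₁) (g g' : RawC n A₂ A₁),
    P f → P g → P g' → l2 f (g + g') = l2 f g + l2 f g'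
  l2_smul_right : ∀ {m n : ℕ} (r : ℂ) (f : RawC m A₂ A₁) (g : RawC n A₂ A₁),
    P f → P g → l2 f (r • g) = r • l2 f g
  l3_add₁ : ∀ {m n k : ℕ} (f f' : RawC m A₂ A₁) (g : RawC n A₂ A₁) (h : RawC k A₂ A₁),
    P f → P f' → P g → P h → l3 (f + f') g h = l3 f g h + l3 f' g h
  l3_smul₁ : ∀ {m n k : ℕ} (r : ℂ) (f : RawC m A₂ A₁) (g : RawC n A₂ A₁)
    (h : RawC k A₂ A₁), P f → P g → P h → l3 (r • f) g h = r • l3 f g h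
  l3_add₂ : ∀ {m n k : ℕ} (f : RawC m A₂ A₁) (g g' : RawC n A₂ A₁) (h : RawC k A₂ A₁),
    P f → P g → P g' → P h → l3 f (g + g') h = l3 f g h + l3 f g' h
  l3_smul₂ : ∀ {m n k : ℕ} (r : ℂ) (f : RawC m A₂ A₁) (g : RawC n A₂ A₁)
    (h : RawC k A₂ A₁), P f → P g → P h → l3 f (r • g) h = r • l3 f g h
  l3_add₃ : ∀ {m n k : ℕ} (f : RawC m A₂ A₁) (g : RawC n A₂ A₁) (h h' : RawC k A₂ A₁),
    P f → P g → P h → P h' → l3 f g (h + h') = l3 f g h + l3 f g h'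
  l3_smul₃ : ∀ {m n k : ℕ} (r : ℂ) (f : RawC m A₂ A₁) (g : RawC n A₂ A₁)
    (h : RawC k A₂ A₁), P f → P g → P h → l3 f g (r • h) = r • l3 f g h
  skew2 : ∀ {m n : ℕ} (f : RawC m A₂ A₁) (g : RawC n A₂ A₁), P f → P g →
    l2 f g = ((-1 : ℤ)) ^ ((m + 1) * (n + 1) + 1) •
      castRaw (show n + m + 1 = m + n + 1 by omega) (l2 g f)
  skew3a : ∀ {m n k : ℕ} (f : RawC m A₂ A₁) (g : RawC n A₂ A₁) (h : RawC k A₂ A₁),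
    P f → P g → P h →
    l3 f g h = ((-1 : ℤ)) ^ ((m + 1) * (n + 1) + 1) •
      castRaw (show n + m + k + 1 = m + n + k + 1 by omega) (l3 g f h)
  skew3b : ∀ {m n k : ℕ} (f : RawC m A₂ A₁) (g : RawC n A₂ A₁) (h : RawC k A₂ A₁),
    P f → P g → P h →
    l3 f g h = ((-1 : ℤ)) ^ ((n + 1) * (k + 1) + 1) •
      castRaw (show m + k + n + 1 = m + n + k + 1 by omega) (l3 f h g)
  jac1 : ∀ {n : ℕ} (f : RawC n A₂ A₁), P f → l1 (l1 f) = 0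
  jac2 : ∀ {m n : ℕ} (f : RawC m A₂ A₁) (g : RawC n A₂ A₁), P f → P g →
    castRaw (show m + n + 1 + 1 = m + n + 2 by omega) (l1 (l2 f g))
      - castRaw (show m + 1 + n + 1 = m + n + 2 by omega) (l2 (l1 f) g)
      + ((-1 : ℤ)) ^ ((m + 1) * (n + 1)) •
          castRaw (show n + 1 + m + 1 = m + n + 2 by omega) (l2 (l1 g) f)
      = 0
  jac3 : ∀ {m n k : ℕ} (f : RawC m A₂ A₁) (g : RawC n A₂ A₁) (h : RawC k A₂ A₁),
    P f → P g → P h →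
    -(castRaw (show m + 1 + n + k + 1 = m + n + k + 2 by omega) (l3 (l1 f) g h))
      + ((-1 : ℤ)) ^ ((m + 1) * (n + 1)) •
          castRaw (show n + 1 + m + k + 1 = m + n + k + 2 by omega) (l3 (l1 g) f h)
      - ((-1 : ℤ)) ^ ((k + 1) * ((m + 1) + (n + 1))) •
          castRaw (show k + 1 + m + n + 1 = m + n + k + 2 by omega) (l3 (l1 h) f g)
      + castRaw (show m + n + 1 + k + 1 = m + n + k + 2 by omega) (l2 (l2 f g) h)
      - ((-1 : ℤ)) ^ ((n + 1) * (k + 1)) •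
          castRaw (show m + k + 1 + n + 1 = m + n + k + 2 by omega) (l2 (l2 f h) g)
      + ((-1 : ℤ)) ^ ((m + 1) * ((n + 1) + (k + 1))) •
          castRaw (show n + k + 1 + m + 1 = m + n + k + 2 by omega) (l2 (l2 g h) f)
      - castRaw (show m + n + k + 1 + 1 = m + n + k + 2 by omega) (l1 (l3 f g h))
      = 0
  jac4 : ∀ {m n k l : ℕ} (f : RawC m A₂ A₁) (g : RawC n A₂ A₁) (h : RawC k A₂ A₁)
    (e : RawC l A₂ A₁), P f → P g → P h → P e →
    castRaw (show m + n + 1 + k + l + 1 = m + n + k + l + 2 by omega) (l3 (l2 f g) h e)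
      - ((-1 : ℤ)) ^ ((n + 1) * (k + 1)) •
          castRaw (show m + k + 1 + n + l + 1 = m + n + k + l + 2 by omega)
            (l3 (l2 f h) g e)
      + ((-1 : ℤ)) ^ ((l + 1) * ((n + 1) + (k + 1))) •
          castRaw (show m + l + 1 + n + k + 1 = m + n + k + l + 2 by omega)
            (l3 (l2 f e) g h)
      + ((-1 : ℤ)) ^ ((m + 1) * ((n + 1) + (k + 1))) •
          castRaw (show n + k + 1 + m + l + 1 = m + n + k + l + 2 by omega)
            (l3 (l2 g h) f e)
      - ((-1 : ℤ)) ^ ((m + 1) * (n + 1) + (m + 1) * (l + 1) + (k + 1) * (l + 1)) •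
          castRaw (show n + l + 1 + m + k + 1 = m + n + k + l + 2 by omega)
            (l3 (l2 g e) f h)
      + ((-1 : ℤ)) ^ (((m + 1) + (n + 1)) * ((k + 1) + (l + 1))) •
          castRaw (show k + l + 1 + m + n + 1 = m + n + k + l + 2 by omega)
            (l3 (l2 h e) f g)
      - castRaw (show m + n + k + 1 + l + 1 = m + n + k + l + 2 by omega)
          (l2 (l3 f g h) e)
      + ((-1 : ℤ)) ^ ((k + 1) * (l + 1)) •
          castRaw (show m + n + l + 1 + k + 1 = m + n + k + l + 2 by omega)
            (l2 (l3 f g e) h)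
      - ((-1 : ℤ)) ^ ((n + 1) * ((k + 1) + (l + 1))) •
          castRaw (show m + k + l + 1 + n + 1 = m + n + k + l + 2 by omega)
            (l2 (l3 f h e) g)
      + ((-1 : ℤ)) ^ ((m + 1) * ((n + 1) + (k + 1) + (l + 1))) •
          castRaw (show n + k + l + 1 + m + 1 = m + n + k + l + 2 by omega)
            (l2 (l3 g h e) f)
      = 0
  jac5 : ∀ {a b c d e : ℕ} (x1 : RawC a A₂ A₁) (x2 : RawC b A₂ A₁) (x3 : RawC c A₂ A₁)
    (x4 : RawC d A₂ A₁) (x5 : RawC e A₂ A₁), P x1 → P x2 → P x3 → P x4 → P x5 →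
    castRaw (show a + b + c + 1 + d + e + 1 = a + b + c + d + e + 2 by omega)
        (l3 (l3 x1 x2 x3) x4 x5)
      - ((-1 : ℤ)) ^ ((c + 1) * (d + 1)) •
          castRaw (show a + b + d + 1 + c + e + 1 = a + b + c + d + e + 2 by omega)
            (l3 (l3 x1 x2 x4) x3 x5)
      + ((-1 : ℤ)) ^ ((e + 1) * ((c + 1) + (d + 1))) •
          castRaw (show a + b + e + 1 + c + d + 1 = a + b + c + d + e + 2 by omega)
            (l3 (l3 x1 x2 x5) x3 x4)
      + ((-1 : ℤ)) ^ ((b + 1) * ((c + 1) + (d + 1))) •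
          castRaw (show a + c + d + 1 + b + e + 1 = a + b + c + d + e + 2 by omega)
            (l3 (l3 x1 x3 x4) x2 x5)
      - ((-1 : ℤ)) ^ ((b + 1) * (c + 1) + (b + 1) * (e + 1) + (d + 1) * (e + 1)) •
          castRaw (show a + c + e + 1 + b + d + 1 = a + b + c + d + e + 2 by omega)
            (l3 (l3 x1 x3 x5) x2 x4)
      + ((-1 : ℤ)) ^ (((b + 1) + (c + 1)) * ((d + 1) + (e + 1))) •
          castRaw (show a + d + e + 1 + b + c + 1 = a + b + c + d + e + 2 by omega)
            (l3 (l3 x1 x4 x5) x2 x3)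
      - ((-1 : ℤ)) ^ ((a + 1) * ((b + 1) + (c + 1) + (d + 1))) •
          castRaw (show b + c + d + 1 + a + e + 1 = a + b + c + d + e + 2 by omega)
            (l3 (l3 x2 x3 x4) x1 x5)
      + ((-1 : ℤ)) ^ ((a + 1) * ((b + 1) + (c + 1) + (e + 1)) + (d + 1) * (e + 1)) •
          castRaw (show b + c + e + 1 + a + d + 1 = a + b + c + d + e + 2 by omega)
            (l3 (l3 x2 x3 x5) x1 x4)
      - ((-1 : ℤ)) ^ ((a + 1) * ((b + 1) + (d + 1) + (e + 1)) + (c + 1) * ((d + 1) + (e + 1))) •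
          castRaw (show b + d + e + 1 + a + c + 1 = a + b + c + d + e + 2 by omega)
            (l3 (l3 x2 x4 x5) x1 x3)
      + ((-1 : ℤ)) ^ (((a + 1) + (b + 1)) * ((c + 1) + (d + 1) + (e + 1))) •
          castRaw (show c + d + e + 1 + a + b + 1 = a + b + c + d + e + 2 by omega)
            (l3 (l3 x3 x4 x5) x1 x2)
      = 0

end GradedStructures

section TwistHom

variable {A₁ A₂ : Type*} [AddCommGroup A₁] [Module ℂ A₁] [AddCommGroup A₂] [Module ℂ A₂]

/-- `e^Ĥ = Id + Ĥ` as a linear endomorphism of `A₁ ⊕ A₂`. -/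
def eHp (H : A₂ →ₗ[ℂ] A₁) : (A₁ × A₂) →ₗ[ℂ] (A₁ × A₂) :=
  LinearMap.id + (LinearMap.inl ℂ A₁ A₂).comp (H.comp (LinearMap.snd ℂ A₁ A₂))

/-- `e^{-Ĥ} = Id - Ĥ` as a linear endomorphism of `A₁ ⊕ A₂`. -/
def eHm (H : A₂ →ₗ[ℂ] A₁) : (A₁ × A₂) →ₗ[ℂ] (A₁ × A₂) :=
  LinearMap.id - (LinearMap.inl ℂ A₁ A₂).comp (H.comp (LinearMap.snd ℂ A₁ A₂))

end TwistHom

end LCAF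

set_option linter.unusedSectionVars false

namespace LCAF

section AuxPoly

variable {M N : Type*} [AddCommGroup M] [Module ℂ M] [AddCommGroup N] [Module ℂ N]

lemma mapCoeff_apply {k : ℕ} (g : M →ₗ[ℂ] N) (p : MP k M) (β : Fin k →₀ ℕ) :
    mapCoeff g p β = g (p β) := Finsupp.mapRange_apply

lemma mapCoeff_zero {k : ℕ} (g : M →ₗ[ℂ] N) : mapCoeff g (0 : MP k M) = 0 := by
  ext β; simp [mapCoeff_apply]

lemma mapCoeff_add {k : ℕ} (g : M →ₗ[ℂ] N) (p q : MP k M) :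
    mapCoeff g (p + q) = mapCoeff g p + mapCoeff g q := by
  ext β; simp [mapCoeff_apply]

lemma mapCoeff_smul {k : ℕ} (g : M →ₗ[ℂ] N) (r : ℂ) (p : MP k M) :
    mapCoeff g (r • p) = r • mapCoeff g p := by
  ext β; simp [mapCoeff_apply]

lemma mapCoeff_zsmul {k : ℕ} (g : M →ₗ[ℂ] N) (r : ℤ) (p : MP k M) :
    mapCoeff g (r • p) = r • mapCoeff g p := by
  ext β; simp [mapCoeff_apply]

lemma mapCoeff_single {k : ℕ} (g : M →ₗ[ℂ] N) (α : Fin k →₀ ℕ) (m : M) :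
    mapCoeff g (Finsupp.single α m) = Finsupp.single α (g m) :=
  Finsupp.mapRange_single

lemma mapCoeff_finsetSum {k : ℕ} (g : M →ₗ[ℂ] N) {ι : Type*} (s : Finset ι)
    (f : ι → MP k M) : mapCoeff g (∑ i ∈ s, f i) = ∑ i ∈ s, mapCoeff g (f i) := by
  ext β; simp [mapCoeff_apply, Finsupp.finset_sum_apply]

lemma mapCoeff_finsuppSum {k : ℕ} (g : M →ₗ[ℂ] N) {ι γ : Type*} [Zero γ]
    (s : ι →₀ γ) (f : ι → γ → MP k M) :
    mapCoeff g (s.sum f) = s.sum fun i c => mapCoeff g (f i c) := by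
  rw [Finsupp.sum, Finsupp.sum, mapCoeff_finsetSum]

lemma monMul_zero {k : ℕ} (α : Fin k →₀ ℕ) : monMul α (0 : MP k M) = 0 :=
  Finsupp.mapDomain_zero

lemma monMul_add {k : ℕ} (α : Fin k →₀ ℕ) (p q : MP k M) :
    monMul α (p + q) = monMul α p + monMul α q :=
  Finsupp.mapDomain_add

lemma monMul_single {k : ℕ} (α β : Fin k →₀ ℕ) (m : M) :
    monMul α (Finsupp.single β m) = Finsupp.single (α + β) m :=
  Finsupp.mapDomain_single

lemma monMul_mapCoeff {k : ℕ} (α : Fin k →₀ ℕ) (g : M →ₗ[ℂ] N) (p : MP k M) :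
    monMul α (mapCoeff g p) = mapCoeff g (monMul α p) :=
  Finsupp.mapDomain_mapRange _ _ _ _ (map_add g)

lemma monMul_zeroIdx {k : ℕ} (p : MP k M) : monMul (0 : Fin k →₀ ℕ) p = p := by
  have : (fun β : Fin k →₀ ℕ => (0 : Fin k →₀ ℕ) + β) = id := by
    funext β; simp
  rw [monMul, this, Finsupp.mapDomain_id]

lemma renameV_zero {k k' : ℕ} (h : Fin k → Fin k') :
    renameV h (0 : MP k M) = 0 := Finsupp.mapDomain_zero

lemma renameV_single {k k' : ℕ} (h : Fin k → Fin k') (β : Fin k →₀ ℕ) (m : M) :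
    renameV h (Finsupp.single β m) = Finsupp.single (Finsupp.mapDomain h β) m :=
  Finsupp.mapDomain_single

lemma renameV_mapCoeff {k k' : ℕ} (h : Fin k → Fin k') (g : M →ₗ[ℂ] N) (p : MP k M) :
    renameV h (mapCoeff g p) = mapCoeff g (renameV h p) :=
  Finsupp.mapDomain_mapRange _ _ _ _ (map_add g)

lemma renameV_id {k : ℕ} (p : MP k M) : renameV (id : Fin k → Fin k) p = p := by
  rw [renameV]
  have : (fun α : Fin k →₀ ℕ => Finsupp.mapDomain (id : Fin k → Fin k) α) = id := by
    funext α; rw [Finsupp.mapDomain_id]; rfl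
  rw [this, Finsupp.mapDomain_id]

lemma scaleP_zero {k : ℕ} (q : MP k ℂ) : scaleP q (0 : MP k M) = 0 := by
  rw [scaleP]; simp [Finsupp.sum, monMul_zero]

lemma scaleP_add {k : ℕ} (q : MP k ℂ) (p₁ p₂ : MP k M) :
    scaleP q (p₁ + p₂) = scaleP q p₁ + scaleP q p₂ := by
  rw [scaleP, scaleP, scaleP]
  simp only [Finsupp.sum, monMul_add, smul_add, Finset.sum_add_distrib]

lemma scaleP_mapCoeff {k : ℕ} (q : MP k ℂ) (g : M →ₗ[ℂ] N) (p : MP k M) :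
    scaleP q (mapCoeff g p) = mapCoeff g (scaleP q p) := by
  rw [scaleP, scaleP, Finsupp.sum, Finsupp.sum, mapCoeff_finsetSum]
  refine Finset.sum_congr rfl fun α _ => ?_
  rw [monMul_mapCoeff, mapCoeff_smul]

lemma opnd_zero {k : ℕ} (D : M →ₗ[ℂ] M) (q : MP k ℂ) (c : ℂ) :
    opnd D q c (0 : MP k M) = 0 := by
  rw [opnd]; simp [scaleP_zero, mapCoeff_zero]

lemma opnd_add {k : ℕ} (D : M →ₗ[ℂ] M) (q : MP k ℂ) (c : ℂ) (p₁ p₂ : MP k M) :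
    opnd D q c (p₁ + p₂) = opnd D q c p₁ + opnd D q c p₂ := by
  simp only [opnd, scaleP_add, mapCoeff_add, smul_add]; abel

lemma mapCoeff_comm {k : ℕ} (D S : M →ₗ[ℂ] M) (hS : ∀ m, S (D m) = D (S m))
    (p : MP k M) : mapCoeff D (mapCoeff S p) = mapCoeff S (mapCoeff D p) := by
  ext β; simp [mapCoeff_apply, hS]

lemma opnd_mapCoeff {k : ℕ} (D S : M →ₗ[ℂ] M) (hS : ∀ m, S (D m) = D (S m))
    (q : MP k ℂ) (c : ℂ) (p : MP k M) :
    opnd D q c (mapCoeff S p) = mapCoeff S (opnd D q c p) := by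
  simp only [opnd, scaleP_mapCoeff q S p, mapCoeff_add, mapCoeff_smul]
  rw [mapCoeff_comm D S hS]

lemma iter_zero {k : ℕ} (f : MP k M → MP k M) (hf : f 0 = 0) (n : ℕ) :
    f^[n] (0 : MP k M) = 0 := by
  induction n with
  | zero => rfl
  | succ n ih => rw [Function.iterate_succ_apply', ih, hf]

lemma iter_add {k : ℕ} (f : MP k M → MP k M)
    (hf : ∀ x y, f (x + y) = f x + f y) (n : ℕ) (x y : MP k M) :
    f^[n] (x + y) = f^[n] x + f^[n] y := by
  induction n generalizing x y with
  | zero => rfl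
  | succ n ih => rw [Function.iterate_succ_apply', ih, hf, Function.iterate_succ_apply',
      Function.iterate_succ_apply']

lemma iter_mapCoeff {k : ℕ} (f : MP k M → MP k M) (S : M →ₗ[ℂ] M)
    (hf : ∀ p, f (mapCoeff S p) = mapCoeff S (f p)) (n : ℕ) (p : MP k M) :
    f^[n] (mapCoeff S p) = mapCoeff S (f^[n] p) := by
  induction n generalizing p with
  | zero => rfl
  | succ n ih => rw [Function.iterate_succ_apply', ih, hf, Function.iterate_succ_apply']

lemma foldr_zero {k : ℕ} (l : List (MP k M → MP k M)) (hl : ∀ f ∈ l, f 0 = 0) :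
    (l.foldr (· ∘ ·) id) (0 : MP k M) = 0 := by
  induction l with
  | nil => rfl
  | cons f t ih =>
    simp only [List.foldr_cons, Function.comp_apply]
    rw [ih fun g hg => hl g (List.mem_cons_of_mem _ hg), hl f (List.mem_cons_self)]

lemma foldr_add {k : ℕ} (l : List (MP k M → MP k M))
    (hl : ∀ f ∈ l, ∀ x y, f (x + y) = f x + f y) (x y : MP k M) :
    (l.foldr (· ∘ ·) id) (x + y) = (l.foldr (· ∘ ·) id) x + (l.foldr (· ∘ ·) id) y := by
  induction l generalizing x y with
  | nil => rfl
  | cons f t ih =>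
    simp only [List.foldr_cons, Function.comp_apply]
    rw [ih (fun g hg => hl g (List.mem_cons_of_mem _ hg)) x y,
      hl f (List.mem_cons_self)]

lemma foldr_mapCoeff {k : ℕ} (l : List (MP k M → MP k M)) (S : M →ₗ[ℂ] M)
    (hl : ∀ f ∈ l, ∀ p, f (mapCoeff S p) = mapCoeff S (f p)) (p : MP k M) :
    (l.foldr (· ∘ ·) id) (mapCoeff S p) = mapCoeff S ((l.foldr (· ∘ ·) id) p) := by
  induction l generalizing p with
  | nil => rfl
  | cons f t ih =>
    simp only [List.foldr_cons, Function.comp_apply]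
    rw [ih (fun g hg => hl g (List.mem_cons_of_mem _ hg)) p,
      hl f (List.mem_cons_self)]

/-- The composed operator used in `substFun`. -/
def opsOf {k k' : ℕ} (D : M →ₗ[ℂ] M) (q : Fin k → MP k' ℂ) (c : Fin k → ℂ)
    (α : Fin k →₀ ℕ) : MP k' M → MP k' M :=
  (List.ofFn fun i : Fin k => (opnd D (q i) (c i))^[α i]).foldr (· ∘ ·) id

lemma substFun_eq {k k' : ℕ} (D : M →ₗ[ℂ] M) (q : Fin k → MP k' ℂ) (c : Fin k → ℂ)
    (p : MP k M) :
    substFun D q c p = p.sum fun α m => opsOf D q c α (Finsupp.single 0 m) := rfl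

lemma opsOf_zero {k k' : ℕ} (D : M →ₗ[ℂ] M) (q : Fin k → MP k' ℂ) (c : Fin k → ℂ)
    (α : Fin k →₀ ℕ) : opsOf D q c α (0 : MP k' M) = 0 := by
  refine foldr_zero _ fun f hf => ?_
  obtain ⟨i, rfl⟩ := List.mem_ofFn.mp hf
  exact iter_zero _ (opnd_zero D (q i) (c i)) _

lemma opsOf_add {k k' : ℕ} (D : M →ₗ[ℂ] M) (q : Fin k → MP k' ℂ) (c : Fin k → ℂ)
    (α : Fin k →₀ ℕ) (x y : MP k' M) :
    opsOf D q c α (x + y) = opsOf D q c α x + opsOf D q c α y := by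
  refine foldr_add _ (fun f hf => ?_) x y
  obtain ⟨i, rfl⟩ := List.mem_ofFn.mp hf
  exact iter_add _ (opnd_add D (q i) (c i)) _

lemma opsOf_mapCoeff {k k' : ℕ} (D S : M →ₗ[ℂ] M) (hS : ∀ m, S (D m) = D (S m))
    (q : Fin k → MP k' ℂ) (c : Fin k → ℂ) (α : Fin k →₀ ℕ) (p : MP k' M) :
    opsOf D q c α (mapCoeff S p) = mapCoeff S (opsOf D q c α p) := by
  refine foldr_mapCoeff _ S (fun f hf => ?_) p
  obtain ⟨i, rfl⟩ := List.mem_ofFn.mp hf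
  exact iter_mapCoeff _ S (opnd_mapCoeff D S hS (q i) (c i)) _

lemma substFun_zero {k k' : ℕ} (D : M →ₗ[ℂ] M) (q : Fin k → MP k' ℂ) (c : Fin k → ℂ) :
    substFun D q c (0 : MP k M) = 0 :=
  Finsupp.sum_zero_index

lemma substFun_add {k k' : ℕ} (D : M →ₗ[ℂ] M) (q : Fin k → MP k' ℂ) (c : Fin k → ℂ)
    (p₁ p₂ : MP k M) :
    substFun D q c (p₁ + p₂) = substFun D q c p₁ + substFun D q c p₂ := by
  rw [substFun_eq, substFun_eq, substFun_eq]
  refine Finsupp.sum_add_index' (fun α => ?_) fun α m₁ m₂ => ?_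
  · rw [Finsupp.single_zero, opsOf_zero]
  · rw [Finsupp.single_add, opsOf_add]

lemma substFun_neg {k k' : ℕ} (D : M →ₗ[ℂ] M) (q : Fin k → MP k' ℂ) (c : Fin k → ℂ)
    (p : MP k M) : substFun D q c (-p) = -(substFun D q c p) := by
  have := substFun_add D q c p (-p)
  rw [add_neg_cancel, substFun_zero] at this
  exact (neg_eq_of_add_eq_zero_right this.symm).symm
  
end AuxPoly

end LCAF
namespace LCAF

section AuxPoly2

variable {M N : Type*} [AddCommGroup M] [Module ℂ M] [AddCommGroup N] [Module ℂ N]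

lemma substFun_mapCoeff {k k' : ℕ} (D S : M →ₗ[ℂ] M) (hS : ∀ m, S (D m) = D (S m))
    (q : Fin k → MP k' ℂ) (c : Fin k → ℂ) (p : MP k M) :
    substFun D q c (mapCoeff S p) = mapCoeff S (substFun D q c p) := by
  rw [substFun_eq, substFun_eq, mapCoeff]
  rw [Finsupp.sum_mapRange_index (fun α => by rw [Finsupp.single_zero, opsOf_zero])]
  rw [mapCoeff_finsuppSum]
  refine Finsupp.sum_congr fun α _ => ?_
  rw [← opsOf_mapCoeff D S hS, mapCoeff_single]

lemma sum_single_map {k : ℕ} (g : M →ₗ[ℂ] N) (p : MP k M) :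
    (p.sum fun β x => Finsupp.single β (g x)) = mapCoeff g p := by
  induction p using Finsupp.induction_linear with
  | zero => rw [Finsupp.sum_zero_index, mapCoeff_zero]
  | add f₁ f₂ h₁ h₂ =>
    rw [Finsupp.sum_add_index' (fun β => by simp) (fun β x y => by
      rw [map_add, Finsupp.single_add]), h₁, h₂, mapCoeff_add]
  | single β m =>
    rw [Finsupp.sum_single_index (by simp), mapCoeff_single]

lemma substFun_id1 (D : M →ₗ[ℂ] M) (p : MP 1 M) :
    substFun D (fun _ : Fin 1 => Xv 0) (fun _ => (0 : ℂ)) p = p := by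
  rw [substFun_eq]
  have hops : ∀ (α : Fin 1 →₀ ℕ) (m : M),
      opsOf D (fun _ : Fin 1 => Xv 0) (fun _ => (0:ℂ)) α (Finsupp.single 0 m)
        = Finsupp.single α m := by
    intro α m
    have hop : ∀ x : MP 1 M, opnd D (Xv 0) 0 x = monMul lam1 x := by
      intro x
      rw [opnd, zero_smul, add_zero, scaleP, Xv,
        Finsupp.sum_single_index (by rw [zero_smul]), one_smul]
      rfl
    have hiter : ∀ (n : ℕ) (m : M),
        (opnd D (Xv 0) 0)^[n] (Finsupp.single 0 m)
          = Finsupp.single (Finsupp.single (0 : Fin 1) n) m := by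
      intro n m
      induction n with
      | zero => simp
      | succ n ih =>
        rw [Function.iterate_succ_apply', ih, hop, lam1, monMul_single]
        congr 1
        rw [← Finsupp.single_add, add_comm 1 n]
    rw [opsOf]
    have : (List.ofFn fun i : Fin 1 => (opnd D ((fun _ : Fin 1 => Xv (0:Fin 1)) i)
        ((fun _ : Fin 1 => (0:ℂ)) i))^[α i]) = [(opnd D (Xv 0) 0)^[α 0]] := by
      simp [List.ofFn_succ]
    rw [this]
    show (opnd D (Xv 0) 0)^[α 0] (Finsupp.single 0 m) = _
    have hα : Finsupp.single (0 : Fin 1) (α 0) = α := by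
      refine Finsupp.ext fun i => ?_
      have hi : i = 0 := Subsingleton.elim i 0
      subst hi; simp
    rw [hiter, hα]
  calc (p.sum fun α m => opsOf D (fun _ : Fin 1 => Xv 0) (fun _ => (0:ℂ)) α
          (Finsupp.single 0 m))
      = p.sum fun α m => Finsupp.single α m := Finsupp.sum_congr fun α _ => hops α _
    _ = p := Finsupp.sum_single p

lemma exprQ_zero : exprQ (0 : Fin 2) = Xv 0 := by
  rw [exprQ, dif_neg (by decide)]
  rfl

lemma exprQ_one : exprQ (1 : Fin 2) = -(Xv 0) := by
  rw [exprQ, dif_pos (by decide : (1 : Fin 2) = Fin.last 1)]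
  rw [Fin.sum_univ_one]

lemma exprC_zero : exprC (0 : Fin 2) = 0 := by
  rw [exprC, if_neg (by decide)]

lemma exprC_one : exprC (1 : Fin 2) = -1 := by
  rw [exprC, if_pos (by decide : (1 : Fin 2) = Fin.last 1)]

lemma perm_fin2 (σ : Equiv.Perm (Fin 2)) :
    σ = Equiv.refl (Fin 2) ∨ σ = Equiv.swap 0 1 := by
  have h2 : ∀ i : Fin 2, i = 0 ∨ i = 1 := by decide
  rcases h2 (σ 0) with h0 | h0
  · left
    apply Equiv.ext
    intro i
    rcases h2 i with rfl | rfl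
    · simpa using h0
    · rcases h2 (σ 1) with h1 | h1
      · exact absurd (σ.injective (h1.trans h0.symm)) (by decide)
      · simpa using h1
  · right
    apply Equiv.ext
    intro i
    rcases h2 i with rfl | rfl
    · rw [h0, Equiv.swap_apply_left]
    · rcases h2 (σ 1) with h1 | h1
      · rw [h1, Equiv.swap_apply_right]
      · exact absurd (σ.injective (h1.trans h0.symm)) (by decide)

end AuxPoly2

end LCAF
namespace LCAF
section Exp
variable {A : Type*} [AddCommGroup A] [Module ℂ A]

lemma filter_unsh1 :
    Finset.filter (fun σ : Equiv.Perm (Fin 2) => IsUnsh 1 σ) Finset.univ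
      = {Equiv.refl (Fin 2), Equiv.swap 0 1} := by
  rw [Finset.filter_true_of_mem]
  · ext σ
    simp only [Finset.mem_univ, Finset.mem_insert, Finset.mem_singleton, true_iff]
    exact perm_fin2 σ
  · intro σ _
    intro i j hij hc
    exfalso
    have h1 : (i : ℕ) < (j : ℕ) := hij
    have h2 : (j : ℕ) < 2 := j.isLt
    omega

lemma refl_ne_swap : Equiv.refl (Fin 2) ≠ Equiv.swap 0 1 := by
  intro h
  have := congrArg (fun e : Equiv.Perm (Fin 2) => e 0) h
  simp only [Equiv.refl_apply, Equiv.swap_apply_left] at this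
  exact absurd this (by decide)

lemma castLE12_zero (h : 1 ≤ 2) : Fin.castLE h (0 : Fin 1) = (0 : Fin 2) := rfl

lemma diamond_right_eval (DA N : A →ₗ[ℂ] A) (P : RawC 1 A A)
    (hZ : ∀ (b : Fin 2 → A) (i : Fin 2), b i = 0 → P b = 0)
    (hSkew : ∀ b : Fin 2 → A, P b = -(sub1 DA (P (b ∘ (Equiv.swap (0 : Fin 2) 1)))))
    (a : Fin 2 → A) :
    diamond DA P (fun x : Fin 1 → A => Finsupp.single 0 (N (x 0))) a
      = P (Function.update a 0 (N (a 0))) + P (Function.update a 1 (N (a 1))) := by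
  unfold diamond
  show (∑ σ ∈ Finset.filter (fun σ : Equiv.Perm (Fin 2) => IsUnsh 1 σ) Finset.univ,
    ((Equiv.Perm.sign σ : ℤˣ) : ℤ) • substFun DA
      (fun v : Fin 1 => if v.val = 0 then ∑ i : Fin 1, exprQ (σ (Fin.castLE (by omega) i))
        else exprQ (σ v.castSucc))
      (fun v : Fin 1 => if v.val = 0 then ∑ i : Fin 1, exprC (σ (Fin.castLE (by omega) i))
        else exprC (σ v.castSucc))
      ((Finsupp.single (0 : Fin 0 →₀ ℕ) (N (a (σ (Fin.castLE (by omega) (0 : Fin 1)))))).sum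
        fun β x =>
        monMul (Finsupp.mapDomain (fun i : Fin 0 => (Fin.cast (by omega) (Fin.castAdd 1 i) : Fin 1)) β)
          (renameV (fun j : Fin 1 => (Fin.cast (by omega) (Fin.natAdd 0 j) : Fin 1))
            (P (Fin.cons x fun j : Fin 1 => a (σ (Fin.cast (by omega) (Fin.natAdd 1 j))))))))
    = P (Function.update a 0 (N (a 0))) + P (Function.update a 1 (N (a 1)))
  rw [filter_unsh1, Finset.sum_pair refl_ne_swap]
  simp only [Equiv.refl_apply, Equiv.Perm.sign_refl, Units.val_one, one_smul,
    Equiv.Perm.sign_swap (show (0 : Fin 2) ≠ 1 by decide), castLE12_zero,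
    Equiv.swap_apply_left]
  rw [Finsupp.sum_single_index (by
    rw [hZ _ 0 (Fin.cons_zero _ _), renameV_zero, monMul_zero])]
  rw [Finsupp.sum_single_index (by
    rw [hZ _ 0 (Fin.cons_zero _ _), renameV_zero, monMul_zero])]
  rw [Finsupp.mapDomain_zero, monMul_zeroIdx, monMul_zeroIdx]
  have hr : ∀ h : 0 + 1 = 1, (fun j : Fin 1 => Fin.cast h (Fin.natAdd 0 j)) = id := by
    intro h; funext j; exact Fin.ext (by simp)
  rw [hr, renameV_id, renameV_id]
  have hconsR : ∀ h : 1 + 1 = 2,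
      (Fin.cons (N (a 0)) fun j : Fin 1 => a (Fin.cast h (Fin.natAdd 1 j)))
        = Function.update a 0 (N (a 0)) := by
    intro h; funext i
    refine Fin.cases ?_ (fun j => ?_) i
    · simp
    · have hj : j = 0 := Subsingleton.elim j 0
      subst hj
      have h1 : Fin.cast h (Fin.natAdd 1 (0 : Fin 1)) = (1 : Fin 2) := rfl
      have h2 : Fin.succ (0 : Fin 1) = (1 : Fin 2) := rfl
      rw [Fin.cons_succ, h1, h2, Function.update_of_ne (by decide)]
  have hconsS : ∀ h : 1 + 1 = 2,
      (Fin.cons (N (a 1)) fun j : Fin 1 => a ((Equiv.swap (0 : Fin 2) 1) (Fin.cast h (Fin.natAdd 1 j))))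
        = (Function.update a 1 (N (a 1))) ∘ ⇑(Equiv.swap (0 : Fin 2) 1) := by
    intro h; funext i
    refine Fin.cases ?_ (fun j => ?_) i
    · show N (a 1) = Function.update a 1 (N (a 1)) ((Equiv.swap (0 : Fin 2) 1) 0)
      rw [Equiv.swap_apply_left, Function.update_self]
    · have hj : j = 0 := Subsingleton.elim j 0
      subst hj
      have h1 : Fin.cast h (Fin.natAdd 1 (0 : Fin 1)) = (1 : Fin 2) := rfl
      have h2 : Fin.succ (0 : Fin 1) = (1 : Fin 2) := rfl
      rw [Fin.cons_succ, h1, h2]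
      show a ((Equiv.swap (0 : Fin 2) 1) 1) = Function.update a 1 (N (a 1)) ((Equiv.swap (0 : Fin 2) 1) 1)
      rw [Equiv.swap_apply_right, Function.update_of_ne (by decide)]
  rw [hconsR, hconsS]
  have hQ0 : ∀ h : (1:ℕ) ≤ 2,
      (fun v : Fin 1 => if (v : ℕ) = 0 then ∑ i : Fin 1, exprQ (Fin.castLE h i)
        else exprQ v.castSucc) = fun _ : Fin 1 => Xv 0 := by
    intro h; funext v
    rw [if_pos (by omega), Fin.sum_univ_one, castLE12_zero, exprQ_zero]
  have hC0 : ∀ h : (1:ℕ) ≤ 2,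
      (fun v : Fin 1 => if (v : ℕ) = 0 then ∑ i : Fin 1, exprC (Fin.castLE h i)
        else exprC v.castSucc) = fun _ : Fin 1 => (0 : ℂ) := by
    intro h; funext v
    rw [if_pos (by omega), Fin.sum_univ_one, castLE12_zero, exprC_zero]
  have hQ1 : ∀ h : (1:ℕ) ≤ 2,
      (fun v : Fin 1 => if (v : ℕ) = 0 then ∑ i : Fin 1, exprQ ((Equiv.swap (0:Fin 2) 1) (Fin.castLE h i))
        else exprQ ((Equiv.swap (0:Fin 2) 1) v.castSucc)) = fun _ : Fin 1 => -(Xv 0) := by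
    intro h; funext v
    rw [if_pos (by omega), Fin.sum_univ_one, castLE12_zero, Equiv.swap_apply_left, exprQ_one]
  have hC1 : ∀ h : (1:ℕ) ≤ 2,
      (fun v : Fin 1 => if (v : ℕ) = 0 then ∑ i : Fin 1, exprC ((Equiv.swap (0:Fin 2) 1) (Fin.castLE h i))
        else exprC ((Equiv.swap (0:Fin 2) 1) v.castSucc)) = fun _ : Fin 1 => (-1 : ℂ) := by
    intro h; funext v
    rw [if_pos (by omega), Fin.sum_univ_one, castLE12_zero, Equiv.swap_apply_left, exprC_one]
  rw [hQ0, hC0, hQ1, hC1, substFun_id1]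
  have hsub : ∀ p : MP 1 A,
      substFun DA (fun _ : Fin 1 => -(Xv 0)) (fun _ : Fin 1 => (-1 : ℂ)) p = sub1 DA p :=
    fun _ => rfl
  rw [hsub, show (((-1 : ℤˣ) : ℤ)) = -1 from rfl, neg_one_zsmul,
    ← hSkew (Function.update a 1 (N (a 1)))]

end Exp
end LCAF

namespace LCAF
section Exp2
variable {A : Type*} [AddCommGroup A] [Module ℂ A]

lemma filter_unsh2 :
    Finset.filter (fun σ : Equiv.Perm (Fin 2) => IsUnsh 2 σ) Finset.univ
      = {Equiv.refl (Fin 2)} := by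
  ext σ
  simp only [Finset.mem_filter, Finset.mem_univ, true_and, Finset.mem_singleton]
  constructor
  · intro h
    rcases perm_fin2 σ with rfl | rfl
    · rfl
    · exfalso
      have := h 0 1 (by decide) (Or.inl (by norm_num))
      rw [Equiv.swap_apply_left, Equiv.swap_apply_right] at this
      exact absurd this (by decide)
  · rintro rfl
    intro i j hij _
    simpa using hij

set_option maxHeartbeats 1000000 in
lemma diamond_left_eval (DA N : A →ₗ[ℂ] A) (P : RawC 1 A A) (a : Fin 2 → A) :
    diamond DA (fun x : Fin 1 → A => Finsupp.single 0 (N (x 0))) P a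
      = mapCoeff N (P a) := by
  unfold diamond
  show (∑ σ ∈ Finset.filter (fun σ : Equiv.Perm (Fin 2) => IsUnsh 2 σ) Finset.univ,
    ((Equiv.Perm.sign σ : ℤˣ) : ℤ) • substFun DA
      (fun v : Fin 1 => if v.val = 1 then ∑ i : Fin 2, exprQ (σ (Fin.castLE (by omega) i))
        else exprQ (σ v.castSucc))
      (fun v : Fin 1 => if v.val = 1 then ∑ i : Fin 2, exprC (σ (Fin.castLE (by omega) i))
        else exprC (σ v.castSucc))
      ((P fun i : Fin 2 => a (σ (Fin.castLE (by omega) i))).sum fun β x =>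
        monMul (Finsupp.mapDomain (fun i : Fin 1 => (Fin.cast (by omega) (Fin.castAdd 0 i) : Fin 1)) β)
          (renameV (fun j : Fin 0 => (Fin.cast (by omega) (Fin.natAdd 1 j) : Fin 1))
            (Finsupp.single (0 : Fin 0 →₀ ℕ)
              (N ((Fin.cons x fun j : Fin 0 => a (σ (Fin.cast (by omega) (Fin.natAdd 2 j))) : Fin 1 → A) 0))))))
    = mapCoeff N (P a)
  rw [filter_unsh2, Finset.sum_singleton]
  simp only [Equiv.refl_apply, Equiv.Perm.sign_refl, Units.val_one, one_smul, Fin.cons_zero,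
    renameV_single, Finsupp.mapDomain_zero]
  have he : ∀ h : 1 + 0 = 1, (fun i : Fin 1 => Fin.cast h (Fin.castAdd 0 i)) = id := by
    intro h; funext i; exact Fin.ext (by simp)
  rw [he]
  simp only [Finsupp.mapDomain_id, monMul_single, add_zero]
  have hAA : ∀ h : 2 ≤ 2, (fun i : Fin 2 => a (Fin.castLE h i)) = a := by
    intro h; funext i; exact congrArg a (Fin.ext (by simp))
  rw [hAA, sum_single_map]
  have hQ : (fun v : Fin 1 => if v.val = 1 then ∑ i : Fin 2, exprQ (Fin.castLE (by omega : 2 ≤ 2) i)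
      else exprQ v.castSucc) = fun _ : Fin 1 => Xv 0 := by
    funext v
    have hv : v = 0 := Subsingleton.elim v 0
    subst hv
    rw [if_neg (by norm_num), show Fin.castSucc (0 : Fin 1) = (0 : Fin 2) from rfl, exprQ_zero]
  have hC : (fun v : Fin 1 => if v.val = 1 then ∑ i : Fin 2, exprC (Fin.castLE (by omega : 2 ≤ 2) i)
      else exprC v.castSucc) = fun _ : Fin 1 => (0 : ℂ) := by
    funext v
    have hv : v = 0 := Subsingleton.elim v 0
    subst hv
    rw [if_neg (by norm_num), show Fin.castSucc (0 : Fin 1) = (0 : Fin 2) from rfl, exprC_zero]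
  rw [hQ, hC, substFun_id1]

end Exp2
end LCAF
namespace LCAF
section Exp3
variable {A : Type*} [AddCommGroup A] [Module ℂ A]

lemma mapCoeff_neg {k : ℕ} (g : A →ₗ[ℂ] A) (p : MP k A) :
    mapCoeff g (-p) = -(mapCoeff g p) := by
  ext β; simp [mapCoeff_apply]

lemma sub1_add (DA : A →ₗ[ℂ] A) (p q : MP 1 A) :
    sub1 DA (p + q) = sub1 DA p + sub1 DA q := substFun_add _ _ _ _ _

lemma sub1_neg (DA : A →ₗ[ℂ] A) (p : MP 1 A) :
    sub1 DA (-p) = -(sub1 DA p) := substFun_neg _ _ _ _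

lemma sub1_sub (DA : A →ₗ[ℂ] A) (p q : MP 1 A) :
    sub1 DA (p - q) = sub1 DA p - sub1 DA q := by
  rw [sub_eq_add_neg, sub1_add, sub1_neg, sub_eq_add_neg]

lemma sub1_mapCoeff (DA N : A →ₗ[ℂ] A) (hND : ∀ v, N (DA v) = DA (N v))
    (p : MP 1 A) : sub1 DA (mapCoeff N p) = mapCoeff N (sub1 DA p) :=
  substFun_mapCoeff DA N hND _ _ p

lemma nr_right_eval (DA N : A →ₗ[ℂ] A) (P : RawC 1 A A)
    (hZ : ∀ (b : Fin 2 → A) (i : Fin 2), b i = 0 → P b = 0)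
    (hSkew : ∀ b : Fin 2 → A, P b = -(sub1 DA (P (b ∘ (Equiv.swap (0 : Fin 2) 1))))) :
    nr DA P (fun x : Fin 1 → A => Finsupp.single 0 (N (x 0)))
      = fun b : Fin 2 → A => P (Function.update b 0 (N (b 0)))
          + P (Function.update b 1 (N (b 1))) - mapCoeff N (P b) := by
  funext b
  unfold nr
  have hcast : castRaw (Nat.add_comm 0 1)
      (diamond DA (fun x : Fin 1 → A => Finsupp.single 0 (N (x 0))) P)
      = diamond DA (fun x : Fin 1 → A => Finsupp.single 0 (N (x 0))) P := rfl
  rw [hcast, show ((-1 : ℤ)) ^ (1 * 0) = 1 by norm_num, one_smul, Pi.sub_apply,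
    diamond_right_eval DA N P hZ hSkew b, diamond_left_eval DA N P b]

lemma good_step (DA N : A →ₗ[ℂ] A)
    (hND : ∀ v, N (DA v) = DA (N v)) (P : RawC 1 A A)
    (hZ : ∀ (b : Fin 2 → A) (i : Fin 2), b i = 0 → P b = 0)
    (hSkew : ∀ b : Fin 2 → A, P b = -(sub1 DA (P (b ∘ (Equiv.swap (0 : Fin 2) 1))))) :
    (∀ (b : Fin 2 → A) (i : Fin 2), b i = 0 →
      P (Function.update b 0 (N (b 0))) + P (Function.update b 1 (N (b 1)))
        - mapCoeff N (P b) = 0) ∧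
    (∀ b : Fin 2 → A,
      P (Function.update b 0 (N (b 0))) + P (Function.update b 1 (N (b 1)))
        - mapCoeff N (P b)
      = -(sub1 DA (P (Function.update (b ∘ (Equiv.swap (0:Fin 2) 1)) 0 (N ((b ∘ (Equiv.swap (0:Fin 2) 1)) 0)))
          + P (Function.update (b ∘ (Equiv.swap (0:Fin 2) 1)) 1 (N ((b ∘ (Equiv.swap (0:Fin 2) 1)) 1)))
          - mapCoeff N (P (b ∘ (Equiv.swap (0:Fin 2) 1)))))) := by
  constructor
  · intro b i hbi
    fin_cases i
    · have hb0 : b 0 = 0 := hbi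
      rw [hZ (Function.update b 0 (N (b 0))) 0
          (by rw [Function.update_self, hb0, map_zero]),
        hZ (Function.update b 1 (N (b 1))) 0
          (by rw [Function.update_of_ne (by decide)]; exact hb0),
        hZ b 0 hb0, mapCoeff_zero]
      abel
    · have hb1 : b 1 = 0 := hbi
      rw [hZ (Function.update b 0 (N (b 0))) 1
          (by rw [Function.update_of_ne (by decide)]; exact hb1),
        hZ (Function.update b 1 (N (b 1))) 1
          (by rw [Function.update_self, hb1, map_zero]),
        hZ b 1 hb1, mapCoeff_zero]
      abel
  · intro b
    have h1 : Function.update (b ∘ (Equiv.swap (0:Fin 2) 1)) 0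
        (N ((b ∘ (Equiv.swap (0:Fin 2) 1)) 0))
        = (Function.update b 1 (N (b 1))) ∘ (Equiv.swap (0:Fin 2) 1) := by
      funext i
      fin_cases i <;>
        simp [Function.update_apply, Function.comp_apply,
          Equiv.swap_apply_left, Equiv.swap_apply_right]
    have h2 : Function.update (b ∘ (Equiv.swap (0:Fin 2) 1)) 1
        (N ((b ∘ (Equiv.swap (0:Fin 2) 1)) 1))
        = (Function.update b 0 (N (b 0))) ∘ (Equiv.swap (0:Fin 2) 1) := by
      funext i
      fin_cases i <;>
        simp [Function.update_apply, Function.comp_apply,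
          Equiv.swap_apply_left, Equiv.swap_apply_right]
    rw [h1, h2, sub1_sub, sub1_add, sub1_mapCoeff DA N hND]
    have hs1 : sub1 DA (P ((Function.update b 1 (N (b 1))) ∘ (Equiv.swap (0:Fin 2) 1)))
        = -(P (Function.update b 1 (N (b 1)))) := by
      rw [hSkew (Function.update b 1 (N (b 1)))]; rw [neg_neg]
    have hs2 : sub1 DA (P ((Function.update b 0 (N (b 0))) ∘ (Equiv.swap (0:Fin 2) 1)))
        = -(P (Function.update b 0 (N (b 0)))) := by
      rw [hSkew (Function.update b 0 (N (b 0)))]; rw [neg_neg]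
    have hs3 : sub1 DA (P (b ∘ (Equiv.swap (0:Fin 2) 1))) = -(P b) := by
      rw [hSkew b]; rw [neg_neg]
    rw [hs1, hs2, hs3, mapCoeff_neg]
    abel

end Exp3
end LCAF
namespace LCAF
section Exp4
variable {A : Type*} [AddCommGroup A] [Module ℂ A]

lemma mapCoeff_def {k : ℕ} (g : A →ₗ[ℂ] A) (p : MP k A) :
    mapCoeff g p = Finsupp.mapRange ⇑g (map_zero g) p := rfl

lemma mapCoeff_sub {k : ℕ} (g : A →ₗ[ℂ] A) (p q : MP k A) :
    mapCoeff g (p - q) = mapCoeff g p - mapCoeff g q := by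
  ext β; simp [mapCoeff_apply]

lemma sum_conj {k k' : ℕ} (S : A →ₗ[ℂ] A) (p : MP k A)
    (F G : (Fin k →₀ ℕ) → A → MP k' A)
    (h0 : ∀ β, F β 0 = 0) (hFG : ∀ β x, F β (S x) = mapCoeff S (G β x)) :
    (mapCoeff S p).sum F = mapCoeff S (p.sum G) := by
  rw [mapCoeff_def, Finsupp.sum_mapRange_index h0, mapCoeff_finsuppSum]
  exact Finsupp.sum_congr fun β _ => hFG β _

lemma diamond_conj (DA S T : A →ₗ[ℂ] A) (hTS : ∀ v, T (S v) = v)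
    (hSD : ∀ v, S (DA v) = DA (S v)) (P : RawC 1 A A)
    (hZ : ∀ (b : Fin 2 → A) (i : Fin 2), b i = 0 → P b = 0)
    (a : Fin 3 → A) :
    diamond DA (fun b : Fin 2 → A => mapCoeff S (P fun i => T (b i)))
               (fun b : Fin 2 → A => mapCoeff S (P fun i => T (b i))) a
      = mapCoeff S (diamond DA P P fun i => T (a i)) := by
  unfold diamond
  show (∑ σ ∈ Finset.filter (fun σ : Equiv.Perm (Fin 3) => IsUnsh 2 σ) Finset.univ,
      ((Equiv.Perm.sign σ : ℤˣ) : ℤ) • substFun DA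
        (fun v : Fin 2 => if v.val = 1 then ∑ i : Fin 2, exprQ (σ (Fin.castLE (by omega) i))
          else exprQ (σ v.castSucc))
        (fun v : Fin 2 => if v.val = 1 then ∑ i : Fin 2, exprC (σ (Fin.castLE (by omega) i))
          else exprC (σ v.castSucc))
        ((mapCoeff S (P fun i : Fin 2 => T (a (σ (Fin.castLE (by omega) i))))).sum fun β x =>
          monMul (Finsupp.mapDomain
              (fun i : Fin 1 => (Fin.cast (by omega) (Fin.castAdd 1 i) : Fin 2)) β)
            (renameV (fun j : Fin 1 => (Fin.cast (by omega) (Fin.natAdd 1 j) : Fin 2))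
              (mapCoeff S (P fun i : Fin 2 =>
                T ((Fin.cons x fun j : Fin 1 =>
                    a (σ (Fin.cast (by omega) (Fin.natAdd 2 j))) : Fin 2 → A) i))))))
    = mapCoeff S (∑ σ ∈ Finset.filter (fun σ : Equiv.Perm (Fin 3) => IsUnsh 2 σ) Finset.univ,
      ((Equiv.Perm.sign σ : ℤˣ) : ℤ) • substFun DA
        (fun v : Fin 2 => if v.val = 1 then ∑ i : Fin 2, exprQ (σ (Fin.castLE (by omega) i))
          else exprQ (σ v.castSucc))
        (fun v : Fin 2 => if v.val = 1 then ∑ i : Fin 2, exprC (σ (Fin.castLE (by omega) i))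
          else exprC (σ v.castSucc))
        ((P fun i : Fin 2 => T (a (σ (Fin.castLE (by omega) i)))).sum fun β x =>
          monMul (Finsupp.mapDomain
              (fun i : Fin 1 => (Fin.cast (by omega) (Fin.castAdd 1 i) : Fin 2)) β)
            (renameV (fun j : Fin 1 => (Fin.cast (by omega) (Fin.natAdd 1 j) : Fin 2))
              (P (Fin.cons x fun j : Fin 1 =>
                T (a (σ (Fin.cast (by omega) (Fin.natAdd 2 j)))))))))
  rw [mapCoeff_finsetSum]
  refine Finset.sum_congr rfl fun σ _ => ?_
  rw [mapCoeff_zsmul, ← substFun_mapCoeff DA S hSD]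
  congr 1
  congr 1
  refine sum_conj S _ _ _ (fun β => ?_) (fun β x => ?_)
  · show monMul _ (renameV _ (mapCoeff S (P fun i : Fin 2 =>
        T ((Fin.cons (0:A) (fun j : Fin 1 =>
          a (σ (Fin.cast (by omega) (Fin.natAdd 2 j)))) : Fin 2 → A) i)))) = 0
    rw [hZ _ 0 (by
        show T ((Fin.cons (0:A) (fun j : Fin 1 =>
          a (σ (Fin.cast (by omega) (Fin.natAdd 2 j)))) : Fin 2 → A) 0) = 0
        rw [Fin.cons_zero, map_zero]),
      mapCoeff_zero, renameV_zero, monMul_zero]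
  · show monMul _ (renameV _ (mapCoeff S (P fun i : Fin 2 =>
        T ((Fin.cons (S x) (fun j : Fin 1 =>
          a (σ (Fin.cast (by omega) (Fin.natAdd 2 j)))) : Fin 2 → A) i))))
      = mapCoeff S (monMul _ (renameV _ (P (Fin.cons x fun j : Fin 1 =>
          T (a (σ (Fin.cast (by omega) (Fin.natAdd 2 j))))))))
    have harg : (fun i : Fin 2 =>
        T ((Fin.cons (S x) (fun j : Fin 1 =>
          a (σ (Fin.cast (by omega : 2 + 1 = 3) (Fin.natAdd 2 j)))) : Fin 2 → A) i))
        = Fin.cons x fun j : Fin 1 =>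
            T (a (σ (Fin.cast (by omega : 2 + 1 = 3) (Fin.natAdd 2 j)))) := by
      funext i
      refine Fin.cases ?_ (fun j => ?_) i
      · show T ((Fin.cons (S x) (fun j : Fin 1 =>
            a (σ (Fin.cast (by omega) (Fin.natAdd 2 j)))) : Fin 2 → A) 0)
          = (Fin.cons x (fun j : Fin 1 =>
            T (a (σ (Fin.cast (by omega) (Fin.natAdd 2 j))))) : Fin 2 → A) 0
        rw [Fin.cons_zero, Fin.cons_zero, hTS]
      · show T ((Fin.cons (S x) (fun j : Fin 1 =>
            a (σ (Fin.cast (by omega) (Fin.natAdd 2 j)))) : Fin 2 → A) j.succ)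
          = (Fin.cons x (fun j : Fin 1 =>
            T (a (σ (Fin.cast (by omega) (Fin.natAdd 2 j))))) : Fin 2 → A) j.succ
        rw [Fin.cons_succ, Fin.cons_succ]
    rw [harg, renameV_mapCoeff, monMul_mapCoeff]

end Exp4
end LCAF
namespace LCAF
section Exp5
variable {A : Type*} [AddCommGroup A] [Module ℂ A]

/-- One application of `X_Ĥ` in closed form. -/
def XF (N : A →ₗ[ℂ] A) (P : RawC 1 A A) : RawC 1 A A :=
  fun b => P (Function.update b 0 (N (b 0))) + P (Function.update b 1 (N (b 1)))
    - mapCoeff N (P b)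

lemma mapCoeff_mapCoeff_zero {k : ℕ} (N : A →ₗ[ℂ] A) (hNN : ∀ v, N (N v) = 0)
    (p : MP k A) : mapCoeff N (mapCoeff N p) = 0 := by
  ext β; simp [mapCoeff_apply, hNN]

lemma XF2_eval (N : A →ₗ[ℂ] A) (hNN : ∀ v, N (N v) = 0) (P : RawC 1 A A)
    (hZ : ∀ (b : Fin 2 → A) (i : Fin 2), b i = 0 → P b = 0) (b : Fin 2 → A) :
    XF N (XF N P) b = (2 : ℂ) •
      (P (Function.update (Function.update b 0 (N (b 0))) 1 (N (b 1)))
        - mapCoeff N (P (Function.update b 0 (N (b 0))))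
        - mapCoeff N (P (Function.update b 1 (N (b 1))))) := by
  have hne10 : (1 : Fin 2) ≠ 0 := by decide
  have hne01 : (0 : Fin 2) ≠ 1 := by decide
  show XF N P (Function.update b 0 (N (b 0))) + XF N P (Function.update b 1 (N (b 1)))
      - mapCoeff N (XF N P b) = _
  have h1 : XF N P (Function.update b 0 (N (b 0)))
      = P (Function.update (Function.update b 0 (N (b 0))) 1 (N (b 1)))
        - mapCoeff N (P (Function.update b 0 (N (b 0)))) := by
    show P (Function.update (Function.update b 0 (N (b 0))) 0
          (N (Function.update b 0 (N (b 0)) 0)))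
        + P (Function.update (Function.update b 0 (N (b 0))) 1
          (N (Function.update b 0 (N (b 0)) 1)))
        - mapCoeff N (P (Function.update b 0 (N (b 0)))) = _
    rw [hZ _ 0 (by rw [Function.update_self, Function.update_self, hNN]),
      Function.update_of_ne hne10]
    abel
  have h2 : XF N P (Function.update b 1 (N (b 1)))
      = P (Function.update (Function.update b 0 (N (b 0))) 1 (N (b 1)))
        - mapCoeff N (P (Function.update b 1 (N (b 1)))) := by
    show P (Function.update (Function.update b 1 (N (b 1))) 0
          (N (Function.update b 1 (N (b 1)) 0)))
        + P (Function.update (Function.update b 1 (N (b 1))) 1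
          (N (Function.update b 1 (N (b 1)) 1)))
        - mapCoeff N (P (Function.update b 1 (N (b 1)))) = _
    rw [show Function.update b 1 (N (b 1)) 0 = b 0 from Function.update_of_ne hne01 _ _,
      Function.update_comm hne10 (N (b 1)) (N (b 0)) b,
      hZ (Function.update (Function.update b 1 (N (b 1))) 1
          (N (Function.update b 1 (N (b 1)) 1))) 1
        (by rw [Function.update_self, Function.update_self, hNN])]
    abel
  have h3 : mapCoeff N (XF N P b)
      = mapCoeff N (P (Function.update b 0 (N (b 0))))
        + mapCoeff N (P (Function.update b 1 (N (b 1)))) := by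
    show mapCoeff N (P (Function.update b 0 (N (b 0)))
        + P (Function.update b 1 (N (b 1))) - mapCoeff N (P b)) = _
    rw [mapCoeff_sub, mapCoeff_add, mapCoeff_mapCoeff_zero N hNN]
    abel
  rw [h1, h2, h3]
  module

lemma XF3_eval (N : A →ₗ[ℂ] A) (hNN : ∀ v, N (N v) = 0) (P : RawC 1 A A)
    (hZ : ∀ (b : Fin 2 → A) (i : Fin 2), b i = 0 → P b = 0) (b : Fin 2 → A) :
    XF N (XF N (XF N P)) b = -((6 : ℂ) •
      mapCoeff N (P (Function.update (Function.update b 0 (N (b 0))) 1 (N (b 1))))) := by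
  have hne10 : (1 : Fin 2) ≠ 0 := by decide
  have hne01 : (0 : Fin 2) ≠ 1 := by decide
  show XF N (XF N P) (Function.update b 0 (N (b 0)))
      + XF N (XF N P) (Function.update b 1 (N (b 1)))
      - mapCoeff N (XF N (XF N P) b) = _
  rw [XF2_eval N hNN P hZ, XF2_eval N hNN P hZ, XF2_eval N hNN P hZ]
  -- evaluate each piece
  rw [hZ (Function.update (Function.update (Function.update b 0 (N (b 0))) 0
        (N (Function.update b 0 (N (b 0)) 0))) 1
        (N (Function.update b 0 (N (b 0)) 1))) 0
      (by rw [Function.update_of_ne hne01, Function.update_self,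
        Function.update_self, hNN])]
  rw [hZ (Function.update (Function.update b 0 (N (b 0))) 0
        (N (Function.update b 0 (N (b 0)) 0))) 0
      (by rw [Function.update_self, Function.update_self, hNN]), mapCoeff_zero]
  rw [show Function.update b 0 (N (b 0)) 1 = b 1 from Function.update_of_ne hne10 _ _]
  rw [hZ (Function.update (Function.update (Function.update b 1 (N (b 1))) 0
        (N (Function.update b 1 (N (b 1)) 0))) 1
        (N (Function.update b 1 (N (b 1)) 1))) 1
      (by rw [Function.update_self, Function.update_self, hNN])]
  rw [hZ (Function.update (Function.update b 1 (N (b 1))) 1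
        (N (Function.update b 1 (N (b 1)) 1))) 1
      (by rw [Function.update_self, Function.update_self, hNN]), mapCoeff_zero]
  rw [show Function.update b 1 (N (b 1)) 0 = b 0 from Function.update_of_ne hne01 _ _]
  rw [Function.update_comm hne10 (N (b 1)) (N (b 0)) b]
  rw [mapCoeff_smul, mapCoeff_sub, mapCoeff_sub,
    mapCoeff_mapCoeff_zero N hNN, mapCoeff_mapCoeff_zero N hNN]
  module

lemma XF4_eval (N : A →ₗ[ℂ] A) (hNN : ∀ v, N (N v) = 0) (P : RawC 1 A A)
    (hZ : ∀ (b : Fin 2 → A) (i : Fin 2), b i = 0 → P b = 0) :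
    XF N (XF N (XF N (XF N P))) = 0 := by
  have hne10 : (1 : Fin 2) ≠ 0 := by decide
  have hne01 : (0 : Fin 2) ≠ 1 := by decide
  funext b
  show XF N (XF N (XF N P)) (Function.update b 0 (N (b 0)))
      + XF N (XF N (XF N P)) (Function.update b 1 (N (b 1)))
      - mapCoeff N (XF N (XF N (XF N P)) b) = 0
  rw [XF3_eval N hNN P hZ, XF3_eval N hNN P hZ, XF3_eval N hNN P hZ]
  rw [hZ (Function.update (Function.update (Function.update b 0 (N (b 0))) 0
        (N (Function.update b 0 (N (b 0)) 0))) 1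
        (N (Function.update b 0 (N (b 0)) 1))) 0
      (by rw [Function.update_of_ne hne01, Function.update_self,
        Function.update_self, hNN])]
  rw [hZ (Function.update (Function.update (Function.update b 1 (N (b 1))) 0
        (N (Function.update b 1 (N (b 1)) 0))) 1
        (N (Function.update b 1 (N (b 1)) 1))) 1
      (by rw [Function.update_self, Function.update_self, hNN])]
  rw [mapCoeff_neg, mapCoeff_smul, mapCoeff_mapCoeff_zero N hNN]
  simp [mapCoeff_zero]

end Exp5
end LCAF
namespace LCAF
section Exp6
variable {A : Type*} [AddCommGroup A] [Module ℂ A]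

lemma nr_conj (DA S T : A →ₗ[ℂ] A) (hTS : ∀ v, T (S v) = v)
    (hSD : ∀ v, S (DA v) = DA (S v)) (P : RawC 1 A A)
    (hZ : ∀ (b : Fin 2 → A) (i : Fin 2), b i = 0 → P b = 0) :
    nr DA (fun b : Fin 2 → A => mapCoeff S (P fun i => T (b i)))
          (fun b : Fin 2 → A => mapCoeff S (P fun i => T (b i)))
      = fun a : Fin 3 → A => mapCoeff S (nr DA P P fun i => T (a i)) := by
  funext a
  unfold nr
  have hc1 : castRaw (Nat.add_comm 1 1)
      (diamond DA (fun b : Fin 2 → A => mapCoeff S (P fun i => T (b i)))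
        (fun b : Fin 2 → A => mapCoeff S (P fun i => T (b i))))
      = diamond DA (fun b : Fin 2 → A => mapCoeff S (P fun i => T (b i)))
        (fun b : Fin 2 → A => mapCoeff S (P fun i => T (b i))) := rfl
  have hc2 : castRaw (Nat.add_comm 1 1) (diamond DA P P) = diamond DA P P := rfl
  rw [hc1, hc2, Pi.sub_apply, Pi.sub_apply, Pi.smul_apply, Pi.smul_apply,
    mapCoeff_sub, mapCoeff_zsmul, diamond_conj DA S T hTS hSD P hZ a]

lemma castRaw_zero {m n : ℕ} (h : m = n) : castRaw h (0 : RawC m A A) = 0 := by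
  subst h; rfl

lemma diamond_zero_left {p q : ℕ} (DA : A →ₗ[ℂ] A) (g : RawC q A A) :
    diamond DA (0 : RawC p A A) g = 0 := by
  funext a
  unfold diamond
  simp only [Pi.zero_apply, renameV_zero, monMul_zero, Finsupp.sum_fun_zero, substFun_zero,
    smul_zero, Finset.sum_const_zero]

lemma diamond_zero_right {p q : ℕ} (DA : A →ₗ[ℂ] A) (f : RawC p A A) :
    diamond DA f (0 : RawC q A A) = 0 := by
  funext a
  unfold diamond
  simp only [Pi.zero_apply, Finsupp.sum_zero_index, substFun_zero,
    smul_zero, Finset.sum_const_zero]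

lemma nr_zero_left (DA : A →ₗ[ℂ] A) (g : RawC 0 A A) :
    nr DA (0 : RawC 1 A A) g = 0 := by
  unfold nr
  rw [diamond_zero_left, diamond_zero_right, castRaw_zero, smul_zero, sub_zero]

lemma z_of_cochain (DA : A →ₗ[ℂ] A) (P : RawC 1 A A) (hC : IsCochain DA DA P) :
    ∀ (b : Fin 2 → A) (i : Fin 2), b i = 0 → P b = 0 := by
  intro b i hb
  have h1 : b = Function.update b i ((0 : ℂ) • (0 : A)) := by
    rw [smul_zero, ← hb, Function.update_eq_self]
  rw [h1, hC.map_smul, zero_smul]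

lemma skew_of_cochain (DA : A →ₗ[ℂ] A) (P : RawC 1 A A) (hC : IsCochain DA DA P) :
    ∀ b : Fin 2 → A, P b = -(sub1 DA (P (b ∘ ⇑(Equiv.swap (0 : Fin 2) 1)))) := by
  intro b
  have h := hC.skew (Equiv.swap 0 1) b
  rw [Equiv.Perm.sign_swap (by decide : (0 : Fin 2) ≠ 1)] at h
  have hq : (fun j : Fin 1 => exprQ ((Equiv.swap (0 : Fin 2) 1) j.castSucc))
      = fun _ : Fin 1 => -(Xv 0) := by
    funext j
    have hj : j = 0 := Subsingleton.elim j 0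
    subst hj
    rw [show Fin.castSucc (0 : Fin 1) = (0 : Fin 2) from rfl, Equiv.swap_apply_left, exprQ_one]
  have hc' : (fun j : Fin 1 => exprC ((Equiv.swap (0 : Fin 2) 1) j.castSucc))
      = fun _ : Fin 1 => (-1 : ℂ) := by
    funext j
    have hj : j = 0 := Subsingleton.elim j 0
    subst hj
    rw [show Fin.castSucc (0 : Fin 1) = (0 : Fin 2) from rfl, Equiv.swap_apply_left, exprC_one]
  rw [hq, hc'] at h
  rw [h, show (((-1 : ℤˣ) : ℤ)) = -1 from rfl, neg_one_zsmul]
  rfl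

lemma expand_sum (DA : A →ₗ[ℂ] A) (P : RawC 1 A A) (hC : IsCochain DA DA P)
    (N : A →ₗ[ℂ] A) (b : Fin 2 → A) :
    P (fun i => b i + N (b i))
      = P b + P (Function.update b 0 (N (b 0))) + P (Function.update b 1 (N (b 1)))
        + P (Function.update (Function.update b 0 (N (b 0))) 1 (N (b 1))) := by
  have hne10 : (1 : Fin 2) ≠ 0 := by decide
  have hne01 : (0 : Fin 2) ≠ 1 := by decide
  have hb : (fun i => b i + N (b i))
      = Function.update (Function.update b 0 (b 0 + N (b 0))) 1 (b 1 + N (b 1)) := by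
    funext i
    fin_cases i <;> simp [Function.update_apply]
  rw [hb, hC.map_add (Function.update b 0 (b 0 + N (b 0))) 1 (b 1) (N (b 1))]
  have h1 : Function.update (Function.update b 0 (b 0 + N (b 0))) 1 (b 1)
      = Function.update b 0 (b 0 + N (b 0)) := by
    have hx : b 1 = Function.update b 0 (b 0 + N (b 0)) 1 :=
      (Function.update_of_ne hne10 _ _).symm
    rw [hx, Function.update_eq_self]
  rw [h1, hC.map_add b 0 (b 0) (N (b 0)), Function.update_eq_self,
    Function.update_comm hne01 (b 0 + N (b 0)) (N (b 1)) b,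
    hC.map_add (Function.update b 1 (N (b 1))) 0 (b 0) (N (b 0))]
  have h2 : Function.update (Function.update b 1 (N (b 1))) 0 (b 0)
      = Function.update b 1 (N (b 1)) := by
    have hx : b 0 = Function.update b 1 (N (b 1)) 0 :=
      (Function.update_of_ne hne01 _ _).symm
    rw [hx, Function.update_eq_self]
  rw [h2, Function.update_comm hne10 (N (b 1)) (N (b 0)) b]
  abel

end Exp6
end LCAF
namespace LCAF

set_option maxHeartbeats 1000000

/-- Twisting `Π^H = e^{X_Ĥ}(Π)` of a Lie conformal algebra
structure `Π` on `A = A₁ ⊕ A₂` by a `ℂ[∂]`-module homomorphism `H : A₂ → A₁`: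
(i) the exponential series truncates (`X_Ĥ^i(Π) = 0` for `i ≥ 4`) and `Π^H` is
the 4-term sum; (ii) `Π^H_λ = e^{-Ĥ} ∘ Π_λ ∘ (e^Ĥ ⊗ e^Ĥ)`; (iii)
`[Π^H, Π^H]_NR = 0` and `e^Ĥ : (A,Π^H) → (A,Π)` is an isomorphism of Lie
conformal algebras. -/
theorem statement7 {A₁ A₂ : Type*} [AddCommGroup A₁] [Module ℂ A₁]
    [AddCommGroup A₂] [Module ℂ A₂]
    (D1 : A₁ →ₗ[ℂ] A₁) (D2 : A₂ →ₗ[ℂ] A₂)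
    (Pi : RawC 1 (A₁ × A₂) (A₁ × A₂))
    (hC : IsCochain (D1.prodMap D2) (D1.prodMap D2) Pi)
    (hMC : nr (D1.prodMap D2) Pi Pi = 0)
    (H : A₂ →ₗ[ℂ] A₁) (hH : ∀ v : A₂, H (D2 v) = D1 (H v)) :
    (∀ i : ℕ, 4 ≤ i →
      (fun P : RawC 1 (A₁ × A₂) (A₁ × A₂) =>
          nr (D1.prodMap D2) P (hatHom H))^[i] Pi = 0) ∧
    (twist (D1.prodMap D2) Pi (hatHom H) =
      Pi + nr (D1.prodMap D2) Pi (hatHom H)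
        + (2 : ℂ)⁻¹ •
            nr (D1.prodMap D2) (nr (D1.prodMap D2) Pi (hatHom H)) (hatHom H)
        + (6 : ℂ)⁻¹ •
            nr (D1.prodMap D2)
              (nr (D1.prodMap D2) (nr (D1.prodMap D2) Pi (hatHom H)) (hatHom H))
              (hatHom H)) ∧
    (∀ a : Fin 2 → A₁ × A₂,
      twist (D1.prodMap D2) Pi (hatHom H) a =
        mapCoeff (eHm H) (Pi fun i => eHp H (a i))) ∧
    nr (D1.prodMap D2) (twist (D1.prodMap D2) Pi (hatHom H))
      (twist (D1.prodMap D2) Pi (hatHom H)) = 0 ∧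
    Function.Bijective (eHp H) ∧
    (∀ x : A₁ × A₂, eHp H ((D1.prodMap D2) x) = (D1.prodMap D2) (eHp H x)) ∧
    (∀ a : Fin 2 → A₁ × A₂,
      mapCoeff (eHp H) (twist (D1.prodMap D2) Pi (hatHom H) a) =
        Pi fun i => eHp H (a i)) := by
  set DA := D1.prodMap D2 with hDAdef
  set Nf : (A₁ × A₂) →ₗ[ℂ] (A₁ × A₂) :=
    (LinearMap.inl ℂ A₁ A₂).comp (H.comp (LinearMap.snd ℂ A₁ A₂)) with hNfdef
  have hNfv : ∀ v : A₁ × A₂, Nf v = (H v.2, 0) := fun v => rfl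
  have hNN : ∀ v : A₁ × A₂, Nf (Nf v) = 0 := by
    intro v; rw [hNfv, hNfv]; simp
  have hND : ∀ v, Nf (DA v) = DA (Nf v) := by
    intro v
    rw [hNfv, hNfv]
    show (H (D2 v.2), (0 : A₂)) = (D1 (H v.2), D2 0)
    rw [hH v.2, map_zero]
  have hgf : hatHom H = (fun x : Fin 1 → (A₁ × A₂) => Finsupp.single 0 (Nf (x 0))) := by
    funext x; rfl
  have hZPi := z_of_cochain DA Pi hC
  have hSkPi := skew_of_cochain DA Pi hC
  have key : ∀ P : RawC 1 (A₁ × A₂) (A₁ × A₂),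
      (∀ (b : Fin 2 → A₁ × A₂) (i : Fin 2), b i = 0 → P b = 0) →
      (∀ b : Fin 2 → A₁ × A₂, P b = -(sub1 DA (P (b ∘ ⇑(Equiv.swap (0 : Fin 2) 1))))) →
      nr DA P (hatHom H) = XF Nf P := by
    intro P h1 h2
    rw [hgf]
    exact nr_right_eval DA Nf P h1 h2
  have hX1 : nr DA Pi (hatHom H) = XF Nf Pi := key Pi hZPi hSkPi
  have hG1 := good_step DA Nf hND Pi hZPi hSkPi
  have hZ1 : ∀ (b : Fin 2 → A₁ × A₂) (i : Fin 2), b i = 0 → XF Nf Pi b = 0 := hG1.1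
  have hSk1 : ∀ b : Fin 2 → A₁ × A₂,
      XF Nf Pi b = -(sub1 DA (XF Nf Pi (b ∘ ⇑(Equiv.swap (0 : Fin 2) 1)))) := hG1.2
  have hX2 : nr DA (XF Nf Pi) (hatHom H) = XF Nf (XF Nf Pi) := key _ hZ1 hSk1
  have hG2 := good_step DA Nf hND (XF Nf Pi) hZ1 hSk1
  have hZ2 : ∀ (b : Fin 2 → A₁ × A₂) (i : Fin 2), b i = 0 → XF Nf (XF Nf Pi) b = 0 := hG2.1
  have hSk2 : ∀ b : Fin 2 → A₁ × A₂, XF Nf (XF Nf Pi) b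
      = -(sub1 DA (XF Nf (XF Nf Pi) (b ∘ ⇑(Equiv.swap (0 : Fin 2) 1)))) := hG2.2
  have hX3 : nr DA (XF Nf (XF Nf Pi)) (hatHom H) = XF Nf (XF Nf (XF Nf Pi)) :=
    key _ hZ2 hSk2
  have hG3 := good_step DA Nf hND (XF Nf (XF Nf Pi)) hZ2 hSk2
  have hX4 : nr DA (XF Nf (XF Nf (XF Nf Pi))) (hatHom H)
      = XF Nf (XF Nf (XF Nf (XF Nf Pi))) := key _ hG3.1 hG3.2
  have hXF4 : XF Nf (XF Nf (XF Nf (XF Nf Pi))) = 0 := XF4_eval Nf hNN Pi hZPi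
  -- e^{±Ĥ} facts
  have hTS : ∀ v : A₁ × A₂, eHp H (eHm H v) = v := by
    intro v
    show (v - Nf v) + Nf (v - Nf v) = v
    rw [map_sub, hNN v, sub_zero]
    abel
  have hST : ∀ v : A₁ × A₂, eHm H (eHp H v) = v := by
    intro v
    show (v + Nf v) - Nf (v + Nf v) = v
    rw [map_add, hNN v, add_zero]
    abel
  have hSD : ∀ v, eHm H (DA v) = DA (eHm H v) := by
    intro v
    show DA v - Nf (DA v) = DA (v - Nf v)
    rw [map_sub, hND]
  -- claim (iii)
  have hiii : ∀ a : Fin 2 → A₁ × A₂, twist DA Pi (hatHom H) a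
      = mapCoeff (eHm H) (Pi fun i => eHp H (a i)) := by
    intro b
    unfold twist
    rw [hX1, hX2, hX3]
    rw [_root_.Pi.add_apply, _root_.Pi.add_apply, _root_.Pi.add_apply, _root_.Pi.smul_apply, _root_.Pi.smul_apply]
    rw [XF2_eval Nf hNN Pi hZPi b, XF3_eval Nf hNN Pi hZPi b]
    have hepb : (fun i => eHp H (b i)) = fun i => b i + Nf (b i) := by
      funext i; rfl
    rw [hepb, expand_sum DA Pi hC Nf b]
    have hem : ∀ p : MP 1 (A₁ × A₂), mapCoeff (eHm H) p = p - mapCoeff Nf p := by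
      intro p
      refine Finsupp.ext fun β => ?_
      show eHm H (p β) = (p - mapCoeff Nf p) β
      rw [Finsupp.sub_apply, mapCoeff_apply]
      rfl
    rw [hem, mapCoeff_add, mapCoeff_add, mapCoeff_add]
    rw [show XF Nf Pi b = Pi (Function.update b 0 (Nf (b 0)))
        + Pi (Function.update b 1 (Nf (b 1))) - mapCoeff Nf (Pi b) from rfl]
    module
  refine ⟨?_, rfl, hiii, ?_, ?_, ?_, ?_⟩
  · -- (i) iterates vanish
    intro i hi
    obtain ⟨k, rfl⟩ : ∃ k, i = k + 4 := ⟨i - 4, by omega⟩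
    rw [Function.iterate_add_apply]
    have h4 : (fun P : RawC 1 (A₁ × A₂) (A₁ × A₂) => nr DA P (hatHom H))^[4] Pi = 0 := by
      show nr DA (nr DA (nr DA (nr DA Pi (hatHom H)) (hatHom H)) (hatHom H)) (hatHom H) = 0
      rw [hX1, hX2, hX3, hX4, hXF4]
    rw [h4]
    have hz0 : (fun P : RawC 1 (A₁ × A₂) (A₁ × A₂) => nr DA P (hatHom H)) 0 = 0 := by
      show nr DA (0 : RawC 1 (A₁ × A₂) (A₁ × A₂)) (hatHom H) = 0
      exact nr_zero_left DA (hatHom H)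
    induction k with
    | zero => rfl
    | succ k ih =>
      rw [Function.iterate_succ_apply', ih (by omega)]
      exact hz0
  · -- (iv) Maurer-Cartan for the twist
    have htw : twist DA Pi (hatHom H)
        = fun b : Fin 2 → A₁ × A₂ => mapCoeff (eHm H) (Pi fun i => eHp H (b i)) :=
      funext hiii
    rw [htw, nr_conj DA (eHm H) (eHp H) hTS hSD Pi hZPi]
    funext a
    rw [hMC]
    show mapCoeff (eHm H) 0 = 0
    exact mapCoeff_zero _
  · -- (v) bijectivity
    exact Function.bijective_iff_has_inverse.mpr ⟨eHm H, hST, hTS⟩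
  · -- (vi) commutes with ∂
    intro x
    show DA x + Nf (DA x) = DA (x + Nf x)
    rw [map_add, hND]
  · -- (vii)
    intro a
    rw [hiii a]
    refine Finsupp.ext fun β => ?_
    rw [mapCoeff_apply, mapCoeff_apply]
    exact hTS _

end LCAF
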